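/- arXiv:2408.11171 — 10 statements merged into one kernel-verified Lean document; each statement's English description precedes it below -/
import Mathlib

section
/- Let σ > 0, ν > 0, L ∈ ℝ and h ∈ ℝ. Suppose e₁ : ℝ → ℝ is bounded and twice continuously differentiable on (−∞, L], satisfies ν²·e₁''(x) = σ·e₁(x) for all x ≤ L and e₁(L) = h; and suppose e₂ : ℝ → ℝ is bounded and twice continuously differentiable on [L, ∞), satisfies ν²·e₂''(x) = σ·e₂(x) for all x ≥ L and e₂'(L) = e₁'(L) (one-sided derivatives). Then e₂(L) = −h. -/
open Set Filter

lemma aux_const {S : Set ℝ} (hS : Convex ℝ S) (hU : UniqueDiffOn ℝ S) {q : ℝ → ℝ}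
    (hd : ∀ x ∈ S, HasDerivWithinAt q 0 S x) {x y : ℝ} (hx : x ∈ S) (hy : y ∈ S) :
    q x = q y := by
  refine hS.is_const_of_fderivWithin_eq_zero
    (fun z hz => (hd z hz).differentiableWithinAt) (fun z hz => ?_) hx hy
  have := (hd z hz).hasFDerivWithinAt.fderivWithin (hU z hz)
  simpa using this.trans (by ext; simp)

lemma aux_exp {S : Set ℝ} (hS : Convex ℝ S) (hU : UniqueDiffOn ℝ S) {q : ℝ → ℝ} {c : ℝ}
    (hq : ∀ x ∈ S, HasDerivWithinAt q (c * q x) S x) {x y : ℝ} (hx : x ∈ S) (hy : y ∈ S) :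
    q x = q y * Real.exp (c * (x - y)) := by
  have hF : ∀ z ∈ S, HasDerivWithinAt (fun w => q w * Real.exp (-(c * w))) 0 S z := by
    intro z hz
    have h1 : HasDerivAt (fun w => -(c * w)) (-c) z := by
      simpa using ((hasDerivAt_id z).const_mul c).fun_neg
    have hexp : HasDerivAt (fun w => Real.exp (-(c * w))) (Real.exp (-(c * z)) * (-c)) z :=
      h1.exp
    have := (hq z hz).mul hexp.hasDerivWithinAt
    have h0 : c * q z * Real.exp (-(c * z)) + q z * (Real.exp (-(c * z)) * (-c)) = 0 := by ring
    rwa [h0] at this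
  have key := aux_const hS hU hF hx hy
  calc q x = q x * Real.exp (-(c * x)) * Real.exp (c * x) := by
        rw [mul_assoc, ← Real.exp_add]; simp
    _ = q y * Real.exp (-(c * y)) * Real.exp (c * x) := by rw [key]
    _ = q y * Real.exp (c * (x - y)) := by
        rw [mul_assoc, ← Real.exp_add, show -(c * y) + c * x = c * (x - y) by ring]

-- if |v| * exp(c t) ≤ K for all t ≥ 0 and c > 0 then v = 0
lemma aux_vanish {K c v : ℝ} (hc : 0 < c)
    (h : ∀ t : ℝ, 0 ≤ t → |v| * Real.exp (c * t) ≤ K) : v = 0 := by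
  by_contra hv
  have hv' : 0 < |v| := abs_pos.mpr hv
  have hK : |v| ≤ K := by simpa using h 0 le_rfl
  set t := (K + 1) / (c * |v|) with ht
  have hK1 : 0 < K + 1 := by linarith
  have htpos : 0 ≤ t := le_of_lt (div_pos hK1 (by positivity))
  have h1 := h t htpos
  have h2 : c * t + 1 ≤ Real.exp (c * t) := by
    simpa [add_comm] using Real.add_one_le_exp (c * t)
  have h3 : |v| * (c * t + 1) ≤ |v| * Real.exp (c * t) := by nlinarith
  have h4 : |v| * (c * t) = K + 1 := by
    rw [ht]
    field_simp
  nlinarith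

lemma side_left (σ ν L : ℝ) (hσ : 0 < σ) (hν : 0 < ν) (e : ℝ → ℝ)
    (hbdd : ∃ M : ℝ, ∀ x ∈ Iic L, |e x| ≤ M)
    (hC2 : ContDiffOn ℝ 2 e (Iic L))
    (hode : ∀ x ∈ Iic L,
      ν ^ 2 * derivWithin (derivWithin e (Iic L)) (Iic L) x = σ * e x) :
    ν * derivWithin e (Iic L) L = Real.sqrt σ * e L := by
  obtain ⟨M, hM⟩ := hbdd
  set S : Set ℝ := Iic L with hSdef
  have hLS : L ∈ S := self_mem_Iic
  have hS : Convex ℝ S := convex_Iic L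
  have hU : UniqueDiffOn ℝ S := uniqueDiffOn_Iic L
  set u' : ℝ → ℝ := derivWithin e S with hu'def
  set u'' : ℝ → ℝ := derivWithin u' S with hu''def
  set μ : ℝ := Real.sqrt σ / ν with hμdef
  have hν' : ν ≠ 0 := ne_of_gt hν
  have hsq : 0 < Real.sqrt σ := Real.sqrt_pos.mpr hσ
  have hμ : 0 < μ := div_pos hsq hν
  have hs2 : Real.sqrt σ * Real.sqrt σ = σ := Real.mul_self_sqrt hσ.le
  have hu : ∀ x ∈ S, HasDerivWithinAt e (u' x) S x :=
    fun x hx => ((hC2.differentiableOn two_ne_zero) x hx).hasDerivWithinAt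
  have hC1 : ContDiffOn ℝ 1 u' S := hC2.derivWithin hU (m := 1) (by norm_num)
  have hu' : ∀ x ∈ S, HasDerivWithinAt u' (u'' x) S x :=
    fun x hx => ((hC1.differentiableOn one_ne_zero) x hx).hasDerivWithinAt
  have hM0 : 0 ≤ M := (abs_nonneg _).trans (hM L hLS)
  -- the growing component p
  have hp : ∀ x ∈ S, HasDerivWithinAt (fun w => ν * u' w + Real.sqrt σ * e w)
      (μ * (ν * u' x + Real.sqrt σ * e x)) S x := by
    intro x hx
    have h := ((hu' x hx).const_mul ν).add ((hu x hx).const_mul (Real.sqrt σ))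
    have heq : ν * u'' x + Real.sqrt σ * u' x = μ * (ν * u' x + Real.sqrt σ * e x) := by
      have key : ν * (ν * u'' x + Real.sqrt σ * u' x)
          = ν * (μ * (ν * u' x + Real.sqrt σ * e x)) := by
        have h2 : ν * (μ * (ν * u' x + Real.sqrt σ * e x))
            = Real.sqrt σ * (ν * u' x + Real.sqrt σ * e x) := by
          rw [hμdef]; field_simp
        rw [h2]
        linear_combination hode x hx - e x * hs2
      exact mul_left_cancel₀ hν' key
    rwa [heq] at h
  have hpform : ∀ x ∈ S, (ν * u' x + Real.sqrt σ * e x)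
      = (ν * u' L + Real.sqrt σ * e L) * Real.exp (μ * (x - L)) :=
    fun x hx => aux_exp hS hU hp hx hLS
  -- bound on u'
  set P : ℝ := |ν * u' L + Real.sqrt σ * e L| with hPdef
  have hu'bd : ∀ x ∈ S, |u' x| ≤ (P + Real.sqrt σ * M) / ν := by
    intro x hx
    have hexp1 : Real.exp (μ * (x - L)) ≤ 1 := by
      apply Real.exp_le_one_iff.mpr
      have : x - L ≤ 0 := by simp only [hSdef, mem_Iic] at hx; linarith
      nlinarith
    have h1 : |ν * u' x + Real.sqrt σ * e x| ≤ P := by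
      rw [hpform x hx, abs_mul, abs_of_pos (Real.exp_pos _)]
      nlinarith [abs_nonneg (ν * u' L + Real.sqrt σ * e L), Real.exp_pos (μ * (x - L))]
    have h2 : |ν * u' x| ≤ P + Real.sqrt σ * M := by
      have := abs_sub_abs_le_abs_sub (ν * u' x) (-(Real.sqrt σ * e x))
      have h3 : |Real.sqrt σ * e x| ≤ Real.sqrt σ * M := by
        rw [abs_mul, abs_of_pos hsq]
        exact mul_le_mul_of_nonneg_left (hM x hx) hsq.le
      simp only [abs_neg, sub_neg_eq_add] at this
      linarith
    rw [abs_mul, abs_of_pos hν] at h2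
    rw [le_div_iff₀ hν]
    linarith
  -- the decaying component q
  have hq : ∀ x ∈ S, HasDerivWithinAt (fun w => ν * u' w - Real.sqrt σ * e w)
      (-μ * (ν * u' x - Real.sqrt σ * e x)) S x := by
    intro x hx
    have h := ((hu' x hx).const_mul ν).sub ((hu x hx).const_mul (Real.sqrt σ))
    have heq : ν * u'' x - Real.sqrt σ * u' x = -μ * (ν * u' x - Real.sqrt σ * e x) := by
      have key : ν * (ν * u'' x - Real.sqrt σ * u' x)
          = ν * (-μ * (ν * u' x - Real.sqrt σ * e x)) := by
        have h2 : ν * (-μ * (ν * u' x - Real.sqrt σ * e x))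
            = -(Real.sqrt σ * (ν * u' x - Real.sqrt σ * e x)) := by
          rw [hμdef]; field_simp
        rw [h2]
        linear_combination hode x hx - e x * hs2
      exact mul_left_cancel₀ hν' key
    rwa [heq] at h
  have hqform : ∀ x ∈ S, (ν * u' x - Real.sqrt σ * e x)
      = (ν * u' L - Real.sqrt σ * e L) * Real.exp (-μ * (x - L)) :=
    fun x hx => aux_exp hS hU hq hx hLS
  -- blowup argument
  have hqzero : ν * u' L - Real.sqrt σ * e L = 0 := by
    apply aux_vanish hμ (K := ν * ((P + Real.sqrt σ * M) / ν) + Real.sqrt σ * M)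
    intro t ht
    have hxS : L - t ∈ S := by simp [hSdef]; linarith
    have h1 := hqform (L - t) hxS
    have h2 : -μ * (L - t - L) = μ * t := by ring
    rw [h2] at h1
    have h3 : |ν * u' (L - t) - Real.sqrt σ * e (L - t)|
        ≤ ν * ((P + Real.sqrt σ * M) / ν) + Real.sqrt σ * M := by
      have ha : |ν * u' (L - t)| ≤ ν * ((P + Real.sqrt σ * M) / ν) := by
        rw [abs_mul, abs_of_pos hν]
        exact mul_le_mul_of_nonneg_left (hu'bd _ hxS) hν.le
      have hb : |Real.sqrt σ * e (L - t)| ≤ Real.sqrt σ * M := by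
        rw [abs_mul, abs_of_pos hsq]
        exact mul_le_mul_of_nonneg_left (hM _ hxS) hsq.le
      calc |ν * u' (L - t) - Real.sqrt σ * e (L - t)|
          ≤ |ν * u' (L - t)| + |Real.sqrt σ * e (L - t)| := abs_sub _ _
        _ ≤ _ := by linarith
    rw [h1, abs_mul, abs_of_pos (Real.exp_pos _)] at h3
    exact h3
  linarith

lemma side_right (σ ν L : ℝ) (hσ : 0 < σ) (hν : 0 < ν) (e : ℝ → ℝ)
    (hbdd : ∃ M : ℝ, ∀ x ∈ Ici L, |e x| ≤ M)
    (hC2 : ContDiffOn ℝ 2 e (Ici L))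
    (hode : ∀ x ∈ Ici L,
      ν ^ 2 * derivWithin (derivWithin e (Ici L)) (Ici L) x = σ * e x) :
    ν * derivWithin e (Ici L) L = -(Real.sqrt σ * e L) := by
  obtain ⟨M, hM⟩ := hbdd
  set S : Set ℝ := Ici L with hSdef
  have hLS : L ∈ S := self_mem_Ici
  have hS : Convex ℝ S := convex_Ici L
  have hU : UniqueDiffOn ℝ S := uniqueDiffOn_Ici L
  set u' : ℝ → ℝ := derivWithin e S with hu'def
  set u'' : ℝ → ℝ := derivWithin u' S with hu''def
  set μ : ℝ := Real.sqrt σ / ν with hμdef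
  have hν' : ν ≠ 0 := ne_of_gt hν
  have hsq : 0 < Real.sqrt σ := Real.sqrt_pos.mpr hσ
  have hμ : 0 < μ := div_pos hsq hν
  have hs2 : Real.sqrt σ * Real.sqrt σ = σ := Real.mul_self_sqrt hσ.le
  have hu : ∀ x ∈ S, HasDerivWithinAt e (u' x) S x :=
    fun x hx => ((hC2.differentiableOn two_ne_zero) x hx).hasDerivWithinAt
  have hC1 : ContDiffOn ℝ 1 u' S := hC2.derivWithin hU (m := 1) (by norm_num)
  have hu' : ∀ x ∈ S, HasDerivWithinAt u' (u'' x) S x :=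
    fun x hx => ((hC1.differentiableOn one_ne_zero) x hx).hasDerivWithinAt
  have hM0 : 0 ≤ M := (abs_nonneg _).trans (hM L hLS)
  -- the decaying component q
  have hq : ∀ x ∈ S, HasDerivWithinAt (fun w => ν * u' w - Real.sqrt σ * e w)
      (-μ * (ν * u' x - Real.sqrt σ * e x)) S x := by
    intro x hx
    have h := ((hu' x hx).const_mul ν).sub ((hu x hx).const_mul (Real.sqrt σ))
    have heq : ν * u'' x - Real.sqrt σ * u' x = -μ * (ν * u' x - Real.sqrt σ * e x) := by
      have key : ν * (ν * u'' x - Real.sqrt σ * u' x)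
          = ν * (-μ * (ν * u' x - Real.sqrt σ * e x)) := by
        have h2 : ν * (-μ * (ν * u' x - Real.sqrt σ * e x))
            = -(Real.sqrt σ * (ν * u' x - Real.sqrt σ * e x)) := by
          rw [hμdef]; field_simp
        rw [h2]
        linear_combination hode x hx - e x * hs2
      exact mul_left_cancel₀ hν' key
    rwa [heq] at h
  have hqform : ∀ x ∈ S, (ν * u' x - Real.sqrt σ * e x)
      = (ν * u' L - Real.sqrt σ * e L) * Real.exp (-μ * (x - L)) :=
    fun x hx => aux_exp hS hU hq hx hLS
  -- bound on u'
  set P : ℝ := |ν * u' L - Real.sqrt σ * e L| with hPdef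
  have hu'bd : ∀ x ∈ S, |u' x| ≤ (P + Real.sqrt σ * M) / ν := by
    intro x hx
    have hexp1 : Real.exp (-μ * (x - L)) ≤ 1 := by
      apply Real.exp_le_one_iff.mpr
      have : 0 ≤ x - L := by simp only [hSdef, mem_Ici] at hx; linarith
      nlinarith
    have h1 : |ν * u' x - Real.sqrt σ * e x| ≤ P := by
      rw [hqform x hx, abs_mul, abs_of_pos (Real.exp_pos _)]
      nlinarith [abs_nonneg (ν * u' L - Real.sqrt σ * e L), Real.exp_pos (-μ * (x - L))]
    have h2 : |ν * u' x| ≤ P + Real.sqrt σ * M := by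
      have := abs_sub_abs_le_abs_sub (ν * u' x) (Real.sqrt σ * e x)
      have h3 : |Real.sqrt σ * e x| ≤ Real.sqrt σ * M := by
        rw [abs_mul, abs_of_pos hsq]
        exact mul_le_mul_of_nonneg_left (hM x hx) hsq.le
      linarith
    rw [abs_mul, abs_of_pos hν] at h2
    rw [le_div_iff₀ hν]
    linarith
  -- the growing component r
  have hr : ∀ x ∈ S, HasDerivWithinAt (fun w => ν * u' w + Real.sqrt σ * e w)
      (μ * (ν * u' x + Real.sqrt σ * e x)) S x := by
    intro x hx
    have h := ((hu' x hx).const_mul ν).add ((hu x hx).const_mul (Real.sqrt σ))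
    have heq : ν * u'' x + Real.sqrt σ * u' x = μ * (ν * u' x + Real.sqrt σ * e x) := by
      have key : ν * (ν * u'' x + Real.sqrt σ * u' x)
          = ν * (μ * (ν * u' x + Real.sqrt σ * e x)) := by
        have h2 : ν * (μ * (ν * u' x + Real.sqrt σ * e x))
            = Real.sqrt σ * (ν * u' x + Real.sqrt σ * e x) := by
          rw [hμdef]; field_simp
        rw [h2]
        linear_combination hode x hx - e x * hs2
      exact mul_left_cancel₀ hν' key
    rwa [heq] at h
  have hrform : ∀ x ∈ S, (ν * u' x + Real.sqrt σ * e x)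
      = (ν * u' L + Real.sqrt σ * e L) * Real.exp (μ * (x - L)) :=
    fun x hx => aux_exp hS hU hr hx hLS
  have hrzero : ν * u' L + Real.sqrt σ * e L = 0 := by
    apply aux_vanish hμ (K := ν * ((P + Real.sqrt σ * M) / ν) + Real.sqrt σ * M)
    intro t ht
    have hxS : L + t ∈ S := by simp [hSdef]; linarith
    have h1 := hrform (L + t) hxS
    have h2 : μ * (L + t - L) = μ * t := by ring
    rw [h2] at h1
    have h3 : |ν * u' (L + t) + Real.sqrt σ * e (L + t)|
        ≤ ν * ((P + Real.sqrt σ * M) / ν) + Real.sqrt σ * M := by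
      have ha : |ν * u' (L + t)| ≤ ν * ((P + Real.sqrt σ * M) / ν) := by
        rw [abs_mul, abs_of_pos hν]
        exact mul_le_mul_of_nonneg_left (hu'bd _ hxS) hν.le
      have hb : |Real.sqrt σ * e (L + t)| ≤ Real.sqrt σ * M := by
        rw [abs_mul, abs_of_pos hsq]
        exact mul_le_mul_of_nonneg_left (hM _ hxS) hsq.le
      calc |ν * u' (L + t) + Real.sqrt σ * e (L + t)|
          ≤ |ν * u' (L + t)| + |Real.sqrt σ * e (L + t)| := abs_add_le _ _
        _ ≤ _ := by linarith
    rw [h1, abs_mul, abs_of_pos (Real.exp_pos _)] at h3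
    exact h3
  linarith

theorem dnwr_halfline_transmission
    (σ ν L h : ℝ) (hσ : 0 < σ) (hν : 0 < ν)
    (e₁ e₂ : ℝ → ℝ)
    (h1bdd : ∃ M : ℝ, ∀ x ∈ Iic L, |e₁ x| ≤ M)
    (h1C2 : ContDiffOn ℝ 2 e₁ (Iic L))
    (h1ode : ∀ x ∈ Iic L,
      ν ^ 2 * derivWithin (derivWithin e₁ (Iic L)) (Iic L) x = σ * e₁ x)
    (h1L : e₁ L = h)
    (h2bdd : ∃ M : ℝ, ∀ x ∈ Ici L, |e₂ x| ≤ M)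
    (h2C2 : ContDiffOn ℝ 2 e₂ (Ici L))
    (h2ode : ∀ x ∈ Ici L,
      ν ^ 2 * derivWithin (derivWithin e₂ (Ici L)) (Ici L) x = σ * e₂ x)
    (hflux : derivWithin e₂ (Ici L) L = derivWithin e₁ (Iic L) L) :
    e₂ L = -h := by
  have hL := side_left σ ν L hσ hν e₁ h1bdd h1C2 h1ode
  have hR := side_right σ ν L hσ hν e₂ h2bdd h2C2 h2ode
  have hsq : 0 < Real.sqrt σ := Real.sqrt_pos.mpr hσ
  rw [hflux] at hR
  rw [h1L] at hL
  have : Real.sqrt σ * e₂ L = -(Real.sqrt σ * h) := by linarith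
  have := mul_left_cancel₀ (ne_of_gt hsq) (by linarith : Real.sqrt σ * e₂ L = Real.sqrt σ * (-h))
  exact this
end

section
/- Let σ > 0, ν > 0, L ∈ ℝ and g ∈ ℝ. Suppose e₁, φ₁ : ℝ → ℝ are bounded and twice continuously differentiable on (−∞, L] with ν²·e₁'' = σ·e₁ and ν²·φ₁'' = σ·φ₁ on (−∞, L], and e₂, φ₂ : ℝ → ℝ are bounded and twice continuously differentiable on [L, ∞) with ν²·e₂'' = σ·e₂ and ν²·φ₂'' = σ·φ₂ on [L, ∞). Assume e₁(L) = g, e₂(L) = g, φ₁'(L) = e₁'(L) − e₂'(L) and −φ₂'(L) = e₁'(L) − e₂'(L) (one-sided derivatives at L). Then φ₁(L) = 2g and φ₂(L) = 2g, so for every θ ∈ ℝ one has g − θ·(φ₁(L) + φ₂(L)) = (1 − 4θ)·g. -/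
open Set Filter

/-- Bounded solution of `ν² u'' = σ u` on the left half-line has `u'(L) = (√σ/ν) u(L)`. -/
lemma left_flux (σ ν L : ℝ) (hσ : 0 < σ) (hν : 0 < ν) (u : ℝ → ℝ)
    (hb : ∃ M : ℝ, ∀ x ∈ Iic L, |u x| ≤ M)
    (hC2 : ContDiffOn ℝ 2 u (Iic L))
    (hode : ∀ x ∈ Iic L,
      ν ^ 2 * derivWithin (derivWithin u (Iic L)) (Iic L) x = σ * u x) :
    derivWithin u (Iic L) L = (Real.sqrt σ / ν) * u L := by
  set l : ℝ := Real.sqrt σ / ν with hl_def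
  have hl : 0 < l := div_pos (Real.sqrt_pos.2 hσ) hν
  have hl2 : l ^ 2 = σ / ν ^ 2 := by
    rw [hl_def, div_pow, Real.sq_sqrt hσ.le]
  have hs : UniqueDiffOn ℝ (Iic L) := uniqueDiffOn_Iic L
  have hconv : Convex ℝ (Iic L) := convex_Iic L
  have hLmem : L ∈ Iic L := self_mem_Iic
  set u' : ℝ → ℝ := derivWithin u (Iic L) with hu'_def
  have hud : DifferentiableOn ℝ u (Iic L) := hC2.differentiableOn (by norm_num)
  have hu'C1 : ContDiffOn ℝ 1 u' (Iic L) := hC2.derivWithin hs (by norm_num)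
  have hu'd : DifferentiableOn ℝ u' (Iic L) := hu'C1.differentiableOn (by norm_num)
  have hu'' : ∀ x ∈ Iic L, derivWithin u' (Iic L) x = l ^ 2 * u x := by
    intro x hx
    have h := hode x hx
    rw [hl2]
    field_simp
    linarith [h]
  -- derivative facts pointwise
  have hu_x : ∀ x ∈ Iic L, HasDerivWithinAt u (u' x) (Iic L) x :=
    fun x hx => (hud x hx).hasDerivWithinAt
  have hu'_x : ∀ x ∈ Iic L, HasDerivWithinAt u' (l ^ 2 * u x) (Iic L) x := by
    intro x hx
    have := (hu'd x hx).hasDerivWithinAt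
    rwa [hu'' x hx] at this
  -- exponential helpers
  have hexp : ∀ (a : ℝ) (x : ℝ), HasDerivAt (fun y => Real.exp (a * (y - L)))
      (a * Real.exp (a * (x - L))) x := by
    intro a x
    have h1 : HasDerivAt (fun y : ℝ => a * (y - L)) a x := by
      simpa using ((hasDerivAt_id x).sub_const L).const_mul a
    simpa [mul_comm] using h1.exp
  -- F := (u' - l u) * exp(l (x - L)) is constant
  set F : ℝ → ℝ := fun x => (u' x - l * u x) * Real.exp (l * (x - L)) with hF_def
  have hF : ∀ x ∈ Iic L, HasDerivWithinAt F 0 (Iic L) x := by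
    intro x hx
    have h1 : HasDerivWithinAt (fun y => u' y - l * u y) (l ^ 2 * u x - l * u' x) (Iic L) x :=
      (hu'_x x hx).sub ((hu_x x hx).const_mul l)
    have h2 := (h1.mul ((hexp l x).hasDerivWithinAt))
    have : (l ^ 2 * u x - l * u' x) * Real.exp (l * (x - L)) +
        (u' x - l * u x) * (l * Real.exp (l * (x - L))) = 0 := by ring
    rwa [this] at h2
  have hFdiff : DifferentiableOn ℝ F (Iic L) := fun x hx => ((hF x hx).differentiableWithinAt)
  have h0map : ContinuousLinearMap.toSpanSingleton ℝ (0:ℝ) = 0 := by ext; simp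
  have hFconst : ∀ x ∈ Iic L, F x = F L := by
    intro x hx
    exact hconv.is_const_of_fderivWithin_eq_zero hFdiff
      (fun y hy => by
        have := (hF y hy).hasFDerivWithinAt.fderivWithin (hs y hy)
        rwa [h0map] at this) hx hLmem
  set c : ℝ := u' L - l * u L with hc_def
  have hFL : F L = c := by simp [hF_def, hc_def]
  have hkey : ∀ x ∈ Iic L, u' x - l * u x = c * Real.exp (-(l * (x - L))) := by
    intro x hx
    have h := (hFconst x hx).trans hFL
    simp only [hF_def] at h
    have hpos : Real.exp (l * (x - L)) ≠ 0 := (Real.exp_pos _).ne'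
    have hinv : Real.exp (-(l * (x - L))) = (Real.exp (l * (x - L)))⁻¹ := Real.exp_neg _
    rw [hinv, ← div_eq_mul_inv]
    exact (eq_div_iff hpos).2 h
  -- G is constant
  set G : ℝ → ℝ := fun x => u x * Real.exp (-l * (x - L))
      + (c / (2 * l)) * Real.exp (-(2 * l) * (x - L)) with hG_def
  have hG : ∀ x ∈ Iic L, HasDerivWithinAt G 0 (Iic L) x := by
    intro x hx
    have h1 : HasDerivWithinAt (fun y => u y * Real.exp (-l * (y - L)))
        (u' x * Real.exp (-l * (x - L)) + u x * (-l * Real.exp (-l * (x - L)))) (Iic L) x :=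
      (hu_x x hx).mul ((hexp (-l) x).hasDerivWithinAt)
    have h2 : HasDerivWithinAt (fun y => (c / (2 * l)) * Real.exp (-(2 * l) * (y - L)))
        ((c / (2 * l)) * (-(2 * l) * Real.exp (-(2 * l) * (x - L)))) (Iic L) x :=
      ((hexp (-(2 * l)) x).hasDerivWithinAt).const_mul _
    have h3 := h1.add h2
    have heq : u' x * Real.exp (-l * (x - L)) + u x * (-l * Real.exp (-l * (x - L))) +
        (c / (2 * l)) * (-(2 * l) * Real.exp (-(2 * l) * (x - L))) = 0 := by
      have hk := hkey x hx
      have hml : -l * (x - L) = -(l * (x - L)) := by ring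
      have he2 : Real.exp (-(2 * l) * (x - L)) =
          Real.exp (-(l * (x - L))) * Real.exp (-(l * (x - L))) := by
        rw [← Real.exp_add]; ring_nf
      rw [hml, he2]
      set e := Real.exp (-(l * (x - L))) with he_def
      have hc2l : c / (2 * l) * (2 * l) = c := div_mul_cancel₀ _ (by positivity)
      linear_combination e * hk - e ^ 2 * hc2l
    rwa [heq] at h3
  have hGdiff : DifferentiableOn ℝ G (Iic L) := fun x hx => ((hG x hx).differentiableWithinAt)
  have hGconst : ∀ x ∈ Iic L, G x = G L := by
    intro x hx
    exact hconv.is_const_of_fderivWithin_eq_zero hGdiff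
      (fun y hy => by
        have := (hG y hy).hasFDerivWithinAt.fderivWithin (hs y hy)
        rwa [h0map] at this) hx hLmem
  -- boundedness forces c = 0
  have hc0 : c = 0 := by
    by_contra hc
    obtain ⟨M, hM⟩ := hb
    have hM0 : 0 ≤ M := (abs_nonneg _).trans (hM L hLmem)
    set a : ℝ := |c| / (2 * l) with ha_def
    have ha : 0 < a := div_pos (abs_pos.2 hc) (by positivity)
    set K : ℝ := |u L + c / (2 * l)| with hK_def
    have hK0 : 0 ≤ K := abs_nonneg _
    -- choose x far to the left
    set t0 : ℝ := (M + K) / a + 1 with ht0_def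
    have hMKa : 0 ≤ (M + K) / a := div_nonneg (by linarith) ha.le
    have ht0 : 1 ≤ t0 := by rw [ht0_def]; linarith
    set x : ℝ := L - ((M + K) / a) / l with hx_def
    have hx : x ∈ Iic L := by
      have hd : 0 ≤ ((M + K) / a) / l := div_nonneg hMKa hl.le
      rw [hx_def]; simp only [mem_Iic]; linarith
    set t : ℝ := Real.exp (-l * (x - L)) with ht_def
    have ht_ge : t0 ≤ t := by
      have : -l * (x - L) = (M + K) / a := by
        rw [hx_def]; field_simp; ring
      rw [ht_def, this, ht0_def]
      linarith [Real.add_one_le_exp ((M + K) / a)]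
    have ht1 : 1 ≤ t := le_trans ht0 ht_ge
    have ht2 : Real.exp (-(2 * l) * (x - L)) = t ^ 2 := by
      rw [ht_def, sq, ← Real.exp_add]; ring_nf
    have hGx : u x * t + c / (2 * l) * t ^ 2 = u L + c / (2 * l) := by
      have h := hGconst x hx
      simp only [hG_def, sub_self, mul_zero, Real.exp_zero, mul_one] at h
      rw [ht2, ← ht_def] at h
      exact h
    -- |c/(2l)| t² ≤ |u L + c/2l| + M t
    have habs : a * t ^ 2 ≤ K + M * t := by
      have h1 : (c / (2 * l)) * t ^ 2 = (u L + c / (2 * l)) - u x * t := by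
        linarith
      have h2 : |c / (2 * l)| * t ^ 2 = |(c / (2 * l)) * t ^ 2| := by
        rw [abs_mul, abs_of_nonneg (by positivity : (0:ℝ) ≤ t ^ 2)]
      have h3 : |(c / (2 * l)) * t ^ 2| ≤ K + M * t := by
        rw [h1]
        calc |(u L + c / (2 * l)) - u x * t| ≤ |u L + c / (2 * l)| + |u x * t| :=
              abs_sub _ _
          _ ≤ K + M * t := by
              rw [abs_mul, abs_of_nonneg (by linarith : (0:ℝ) ≤ t)]
              have := hM x hx
              nlinarith [abs_nonneg (u x)]
      have ha_eq : a = |c / (2 * l)| := by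
        rw [ha_def, abs_div, abs_of_pos (by positivity : (0:ℝ) < 2 * l)]
      rw [ha_eq]; linarith [h2 ▸ h3]
    -- contradiction
    have hat0 : a * t0 = M + K + a := by rw [ht0_def]; field_simp
    have ht_pos : (0:ℝ) < t := lt_of_lt_of_le one_pos ht1
    have h5 : (M + K + a) * t ≤ a * t ^ 2 := by
      nlinarith [mul_le_mul_of_nonneg_left (mul_le_mul_of_nonneg_right ht_ge ht_pos.le) ha.le,
        hat0]
    linarith [habs, h5, mul_le_mul_of_nonneg_left ht1 hK0,
      mul_le_mul_of_nonneg_left ht1 ha.le, ha]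
  -- conclude
  have hfin : u' L - l * u L = c := by rw [hc_def]
  rw [hc0] at hfin
  linarith [hfin]

/-- Bounded solution of `ν² u'' = σ u` on the right half-line has `u'(L) = -(√σ/ν) u(L)`. -/
lemma right_flux (σ ν L : ℝ) (hσ : 0 < σ) (hν : 0 < ν) (u : ℝ → ℝ)
    (hb : ∃ M : ℝ, ∀ x ∈ Ici L, |u x| ≤ M)
    (hC2 : ContDiffOn ℝ 2 u (Ici L))
    (hode : ∀ x ∈ Ici L,
      ν ^ 2 * derivWithin (derivWithin u (Ici L)) (Ici L) x = σ * u x) :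
    derivWithin u (Ici L) L = -(Real.sqrt σ / ν) * u L := by
  set l : ℝ := Real.sqrt σ / ν with hl_def
  have hl : 0 < l := div_pos (Real.sqrt_pos.2 hσ) hν
  have hl2 : l ^ 2 = σ / ν ^ 2 := by
    rw [hl_def, div_pow, Real.sq_sqrt hσ.le]
  have hs : UniqueDiffOn ℝ (Ici L) := uniqueDiffOn_Ici L
  have hconv : Convex ℝ (Ici L) := convex_Ici L
  have hLmem : L ∈ Ici L := self_mem_Ici
  set u' : ℝ → ℝ := derivWithin u (Ici L) with hu'_def
  have hud : DifferentiableOn ℝ u (Ici L) := hC2.differentiableOn (by norm_num)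
  have hu'C1 : ContDiffOn ℝ 1 u' (Ici L) := hC2.derivWithin hs (by norm_num)
  have hu'd : DifferentiableOn ℝ u' (Ici L) := hu'C1.differentiableOn (by norm_num)
  have hu'' : ∀ x ∈ Ici L, derivWithin u' (Ici L) x = l ^ 2 * u x := by
    intro x hx
    have h := hode x hx
    rw [hl2]
    field_simp
    linarith [h]
  have hu_x : ∀ x ∈ Ici L, HasDerivWithinAt u (u' x) (Ici L) x :=
    fun x hx => (hud x hx).hasDerivWithinAt
  have hu'_x : ∀ x ∈ Ici L, HasDerivWithinAt u' (l ^ 2 * u x) (Ici L) x := by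
    intro x hx
    have := (hu'd x hx).hasDerivWithinAt
    rwa [hu'' x hx] at this
  have hexp : ∀ (a : ℝ) (x : ℝ), HasDerivAt (fun y => Real.exp (a * (y - L)))
      (a * Real.exp (a * (x - L))) x := by
    intro a x
    have h1 : HasDerivAt (fun y : ℝ => a * (y - L)) a x := by
      simpa using ((hasDerivAt_id x).sub_const L).const_mul a
    simpa [mul_comm] using h1.exp
  set F : ℝ → ℝ := fun x => (u' x + l * u x) * Real.exp (-l * (x - L)) with hF_def
  have hF : ∀ x ∈ Ici L, HasDerivWithinAt F 0 (Ici L) x := by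
    intro x hx
    have h1 : HasDerivWithinAt (fun y => u' y + l * u y) (l ^ 2 * u x + l * u' x) (Ici L) x :=
      (hu'_x x hx).add ((hu_x x hx).const_mul l)
    have h2 := (h1.mul ((hexp (-l) x).hasDerivWithinAt))
    have : (l ^ 2 * u x + l * u' x) * Real.exp (-l * (x - L)) +
        (u' x + l * u x) * (-l * Real.exp (-l * (x - L))) = 0 := by ring
    rwa [this] at h2
  have hFdiff : DifferentiableOn ℝ F (Ici L) := fun x hx => ((hF x hx).differentiableWithinAt)
  have h0map : ContinuousLinearMap.toSpanSingleton ℝ (0:ℝ) = 0 := by ext; simp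
  have hFconst : ∀ x ∈ Ici L, F x = F L := by
    intro x hx
    exact hconv.is_const_of_fderivWithin_eq_zero hFdiff
      (fun y hy => by
        have := (hF y hy).hasFDerivWithinAt.fderivWithin (hs y hy)
        rwa [h0map] at this) hx hLmem
  set c : ℝ := u' L + l * u L with hc_def
  have hFL : F L = c := by simp [hF_def, hc_def]
  have hkey : ∀ x ∈ Ici L, u' x + l * u x = c * Real.exp (l * (x - L)) := by
    intro x hx
    have h := (hFconst x hx).trans hFL
    simp only [hF_def] at h
    have hpos : Real.exp (-l * (x - L)) ≠ 0 := (Real.exp_pos _).ne'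
    have hinv : Real.exp (l * (x - L)) = (Real.exp (-l * (x - L)))⁻¹ := by
      rw [← Real.exp_neg]; ring_nf
    rw [hinv, ← div_eq_mul_inv]
    exact (eq_div_iff hpos).2 h
  set G : ℝ → ℝ := fun x => u x * Real.exp (l * (x - L))
      - (c / (2 * l)) * Real.exp ((2 * l) * (x - L)) with hG_def
  have hG : ∀ x ∈ Ici L, HasDerivWithinAt G 0 (Ici L) x := by
    intro x hx
    have h1 : HasDerivWithinAt (fun y => u y * Real.exp (l * (y - L)))
        (u' x * Real.exp (l * (x - L)) + u x * (l * Real.exp (l * (x - L)))) (Ici L) x :=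
      (hu_x x hx).mul ((hexp l x).hasDerivWithinAt)
    have h2 : HasDerivWithinAt (fun y => (c / (2 * l)) * Real.exp ((2 * l) * (y - L)))
        ((c / (2 * l)) * ((2 * l) * Real.exp ((2 * l) * (x - L)))) (Ici L) x :=
      ((hexp (2 * l) x).hasDerivWithinAt).const_mul _
    have h3 := h1.sub h2
    have heq : u' x * Real.exp (l * (x - L)) + u x * (l * Real.exp (l * (x - L))) -
        (c / (2 * l)) * ((2 * l) * Real.exp ((2 * l) * (x - L))) = 0 := by
      have hk := hkey x hx
      have he2 : Real.exp ((2 * l) * (x - L)) =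
          Real.exp (l * (x - L)) * Real.exp (l * (x - L)) := by
        rw [← Real.exp_add]; ring_nf
      rw [he2]
      set e := Real.exp (l * (x - L)) with he_def
      have hc2l : c / (2 * l) * (2 * l) = c := div_mul_cancel₀ _ (by positivity)
      linear_combination e * hk - e ^ 2 * hc2l
    rwa [heq] at h3
  have hGdiff : DifferentiableOn ℝ G (Ici L) := fun x hx => ((hG x hx).differentiableWithinAt)
  have hGconst : ∀ x ∈ Ici L, G x = G L := by
    intro x hx
    exact hconv.is_const_of_fderivWithin_eq_zero hGdiff
      (fun y hy => by
        have := (hG y hy).hasFDerivWithinAt.fderivWithin (hs y hy)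
        rwa [h0map] at this) hx hLmem
  have hc0 : c = 0 := by
    by_contra hc
    obtain ⟨M, hM⟩ := hb
    have hM0 : 0 ≤ M := (abs_nonneg _).trans (hM L hLmem)
    set a : ℝ := |c| / (2 * l) with ha_def
    have ha : 0 < a := div_pos (abs_pos.2 hc) (by positivity)
    set K : ℝ := |u L - c / (2 * l)| with hK_def
    have hK0 : 0 ≤ K := abs_nonneg _
    set t0 : ℝ := (M + K) / a + 1 with ht0_def
    have hMKa : 0 ≤ (M + K) / a := div_nonneg (by linarith) ha.le
    have ht0 : 1 ≤ t0 := by rw [ht0_def]; linarith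
    set x : ℝ := L + ((M + K) / a) / l with hx_def
    have hx : x ∈ Ici L := by
      have hd : 0 ≤ ((M + K) / a) / l := div_nonneg hMKa hl.le
      rw [hx_def]; simp only [mem_Ici]; linarith
    set t : ℝ := Real.exp (l * (x - L)) with ht_def
    have ht_ge : t0 ≤ t := by
      have : l * (x - L) = (M + K) / a := by
        rw [hx_def]; field_simp; ring
      rw [ht_def, this, ht0_def]
      linarith [Real.add_one_le_exp ((M + K) / a)]
    have ht1 : 1 ≤ t := le_trans ht0 ht_ge
    have ht2 : Real.exp ((2 * l) * (x - L)) = t ^ 2 := by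
      rw [ht_def, sq, ← Real.exp_add]; ring_nf
    have hGx : u x * t - c / (2 * l) * t ^ 2 = u L - c / (2 * l) := by
      have h := hGconst x hx
      simp only [hG_def, sub_self, mul_zero, Real.exp_zero, mul_one] at h
      rw [ht2, ← ht_def] at h
      exact h
    have habs : a * t ^ 2 ≤ K + M * t := by
      have h1 : (c / (2 * l)) * t ^ 2 = u x * t - (u L - c / (2 * l)) := by
        linarith
      have h2 : |c / (2 * l)| * t ^ 2 = |(c / (2 * l)) * t ^ 2| := by
        rw [abs_mul, abs_of_nonneg (by positivity : (0:ℝ) ≤ t ^ 2)]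
      have h3 : |(c / (2 * l)) * t ^ 2| ≤ K + M * t := by
        rw [h1]
        calc |u x * t - (u L - c / (2 * l))| ≤ |u x * t| + |u L - c / (2 * l)| :=
              abs_sub _ _
          _ ≤ K + M * t := by
              rw [abs_mul, abs_of_nonneg (by linarith : (0:ℝ) ≤ t)]
              have := hM x hx
              nlinarith [abs_nonneg (u x)]
      have ha_eq : a = |c / (2 * l)| := by
        rw [ha_def, abs_div, abs_of_pos (by positivity : (0:ℝ) < 2 * l)]
      rw [ha_eq]; linarith [h2 ▸ h3]
    have hat0 : a * t0 = M + K + a := by rw [ht0_def]; field_simp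
    have ht_pos : (0:ℝ) < t := lt_of_lt_of_le one_pos ht1
    clear_value t x t0 K a c
    have h6 : a * (t0 * t) ≤ a * (t * t) :=
      mul_le_mul_of_nonneg_left (mul_le_mul_of_nonneg_right ht_ge ht_pos.le) ha.le
    have h5 : (M + K + a) * t ≤ a * t ^ 2 := by
      calc (M + K + a) * t = a * (t0 * t) := by rw [← hat0]; ring
        _ ≤ a * (t * t) := h6
        _ = a * t ^ 2 := by ring
    linarith [habs, h5, mul_le_mul_of_nonneg_left ht1 hK0,
      mul_le_mul_of_nonneg_left ht1 ha.le, ha]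
  have hfin : u' L + l * u L = c := by rw [hc_def]
  rw [hc0] at hfin
  linarith [hfin]

theorem nnwr_halfline_onestep
    (σ ν L g : ℝ) (hσ : 0 < σ) (hν : 0 < ν)
    (e₁ φ₁ e₂ φ₂ : ℝ → ℝ)
    (he₁bdd : ∃ M : ℝ, ∀ x ∈ Iic L, |e₁ x| ≤ M)
    (he₁C2 : ContDiffOn ℝ 2 e₁ (Iic L))
    (he₁ode : ∀ x ∈ Iic L,
      ν ^ 2 * derivWithin (derivWithin e₁ (Iic L)) (Iic L) x = σ * e₁ x)
    (hφ₁bdd : ∃ M : ℝ, ∀ x ∈ Iic L, |φ₁ x| ≤ M)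
    (hφ₁C2 : ContDiffOn ℝ 2 φ₁ (Iic L))
    (hφ₁ode : ∀ x ∈ Iic L,
      ν ^ 2 * derivWithin (derivWithin φ₁ (Iic L)) (Iic L) x = σ * φ₁ x)
    (he₂bdd : ∃ M : ℝ, ∀ x ∈ Ici L, |e₂ x| ≤ M)
    (he₂C2 : ContDiffOn ℝ 2 e₂ (Ici L))
    (he₂ode : ∀ x ∈ Ici L,
      ν ^ 2 * derivWithin (derivWithin e₂ (Ici L)) (Ici L) x = σ * e₂ x)
    (hφ₂bdd : ∃ M : ℝ, ∀ x ∈ Ici L, |φ₂ x| ≤ M)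
    (hφ₂C2 : ContDiffOn ℝ 2 φ₂ (Ici L))
    (hφ₂ode : ∀ x ∈ Ici L,
      ν ^ 2 * derivWithin (derivWithin φ₂ (Ici L)) (Ici L) x = σ * φ₂ x)
    (he₁L : e₁ L = g) (he₂L : e₂ L = g)
    (hφ₁flux : derivWithin φ₁ (Iic L) L
      = derivWithin e₁ (Iic L) L - derivWithin e₂ (Ici L) L)
    (hφ₂flux : -derivWithin φ₂ (Ici L) L
      = derivWithin e₁ (Iic L) L - derivWithin e₂ (Ici L) L) :
    φ₁ L = 2 * g ∧ φ₂ L = 2 * g ∧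
      ∀ θ : ℝ, g - θ * (φ₁ L + φ₂ L) = (1 - 4 * θ) * g := by

  have hl : (0:ℝ) < Real.sqrt σ / ν := div_pos (Real.sqrt_pos.2 hσ) hν
  set l : ℝ := Real.sqrt σ / ν with hl_def
  have h1 := left_flux σ ν L hσ hν e₁ he₁bdd he₁C2 he₁ode
  have h2 := right_flux σ ν L hσ hν e₂ he₂bdd he₂C2 he₂ode
  have h3 := left_flux σ ν L hσ hν φ₁ hφ₁bdd hφ₁C2 hφ₁ode
  have h4 := right_flux σ ν L hσ hν φ₂ hφ₂bdd hφ₂C2 hφ₂ode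
  rw [he₁L] at h1
  rw [he₂L] at h2
  have hφ₁L : φ₁ L = 2 * g := by
    have := hφ₁flux
    rw [h1, h2, h3] at this
    have hl0 : l ≠ 0 := hl.ne'
    have : l * φ₁ L = l * (2 * g) := by ring_nf; ring_nf at this; linarith
    exact mul_left_cancel₀ hl0 this
  have hφ₂L : φ₂ L = 2 * g := by
    have := hφ₂flux
    rw [h1, h2, h4] at this
    have hl0 : l ≠ 0 := hl.ne'
    have : l * φ₂ L = l * (2 * g) := by ring_nf; ring_nf at this; linarith
    exact mul_left_cancel₀ hl0 this
  exact ⟨hφ₁L, hφ₂L, fun θ => by rw [hφ₁L, hφ₂L]; ring⟩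
end

section
/- Let ν > 0, τ > 0, a₁, a₂, L, θ ∈ ℝ, and let s ∈ ℝ be such that σ := s + a₁ + a₂·e^{−τs} > 0. Let (h_k)_{k≥0} be a sequence of real numbers and suppose that for every k ≥ 1 there exist functions e₁ᵏ, e₂ᵏ : ℝ → ℝ such that: (i) e₁ᵏ is bounded and twice continuously differentiable on (−∞, L], satisfies ν²·(e₁ᵏ)''(x) = σ·e₁ᵏ(x) for all x ≤ L, and e₁ᵏ(L) = h_{k−1}; (ii) e₂ᵏ is bounded and twice continuously differentiable on [L, ∞), satisfies ν²·(e₂ᵏ)''(x) = σ·e₂ᵏ(x) for all x ≥ L, and (e₂ᵏ)'(L) = (e₁ᵏ)'(L) (one-sided derivatives); (iii) h_k = θ·e₂ᵏ(L) + (1 − θ)·h_{k−1}. Then h_k = (1 − 2θ)ᵏ·h_0 for all k ≥ 0. Consequently, if θ = 1/2 then h_k = 0 for all k ≥ 1, and if 0 < θ < 1 then |h_k| ≤ |1 − 2θ|ᵏ·|h_0| and h_k → 0 as k → ∞. -/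
open Set Filter

private lemma ode_combo_const {f : ℝ → ℝ} {S : Set ℝ} (hconv : Convex ℝ S)
    (hU : UniqueDiffOn ℝ S)
    (hf : ContDiffOn ℝ 2 f S) (c : ℝ)
    (hode : ∀ x ∈ S, derivWithin (derivWithin f S) S x = c ^ 2 * f x)
    {x y : ℝ} (hx : x ∈ S) (hy : y ∈ S) :
    (derivWithin f S x - c * f x) * Real.exp (c * x)
      = (derivWithin f S y - c * f y) * Real.exp (c * y) := by
  set f' := derivWithin f S with hf'def
  have hf1 : DifferentiableOn ℝ f S := hf.differentiableOn (by norm_num)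
  have hcd1 : ContDiffOn ℝ 1 f' S := hf.derivWithin hU (by norm_num)
  have hf'd : DifferentiableOn ℝ f' S := hcd1.differentiableOn (by norm_num)
  have key : ∀ z ∈ S, HasDerivWithinAt
      (fun t => (f' t - c * f t) * Real.exp (c * t)) ((fun _ => (0:ℝ)) z) S z := by
    intro z hz
    have h1 : HasDerivWithinAt f (f' z) S z := (hf1 z hz).hasDerivWithinAt
    have h2 : HasDerivWithinAt f' (c ^ 2 * f z) S z := by
      have := (hf'd z hz).hasDerivWithinAt
      rwa [hode z hz] at this
    have h3 : HasDerivAt (fun t => Real.exp (c * t)) (Real.exp (c * z) * (c * 1)) z :=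
      ((hasDerivAt_id z).const_mul c).exp
    have h4 : HasDerivWithinAt (fun t => (f' t - c * f t) * Real.exp (c * t))
        ((c ^ 2 * f z - c * f' z) * Real.exp (c * z) + (f' z - c * f z) * (Real.exp (c * z) * (c * 1))) S z :=
      (h2.sub (h1.const_mul c)).mul h3.hasDerivWithinAt
    convert h4 using 1
    ring
  have hb := hconv.norm_image_sub_le_of_norm_hasDerivWithin_le key
    (fun z _ => le_of_eq (norm_zero)) hx hy
  have : (derivWithin f S y - c * f y) * Real.exp (c * y)
      - (derivWithin f S x - c * f x) * Real.exp (c * x) = 0 := by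
    have := hb
    simp only [Real.norm_eq_abs, zero_mul] at this
    exact abs_eq_zero.mp (le_antisymm this (abs_nonneg _))
  linarith

private lemma half_line_identity {f : ℝ → ℝ} {S : Set ℝ} (hconv : Convex ℝ S)
    (hU : UniqueDiffOn ℝ S) {lam L : ℝ} (hLS : L ∈ S)
    (hf : ContDiffOn ℝ 2 f S)
    (hode : ∀ x ∈ S, derivWithin (derivWithin f S) S x = lam ^ 2 * f x) :
    ∀ x ∈ S, 2 * lam * f x
      = ((derivWithin f S L + lam * f L) * Real.exp (-(lam * L))) * Real.exp (lam * x)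
        - ((derivWithin f S L - lam * f L) * Real.exp (lam * L)) * Real.exp (-(lam * x)) := by
  intro x hx
  have h1 := ode_combo_const hconv hU hf lam hode hx hLS
  have h2' := ode_combo_const hconv hU hf (-lam)
    (fun z hz => by rw [hode z hz]; ring) hx hLS
  simp only [neg_mul] at h2'
  have e1 : Real.exp (lam * x) * Real.exp (-(lam * x)) = 1 := by
    rw [← Real.exp_add]; norm_num
  linear_combination Real.exp (lam * x) * h2' - Real.exp (-(lam * x)) * h1
    - 2 * lam * (f x) * e1

private lemma iic_deriv_eq {lam L : ℝ} (hlam : 0 < lam) {f : ℝ → ℝ}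
    {M : ℝ} (hb : ∀ x ∈ Iic L, |f x| ≤ M)
    (hf : ContDiffOn ℝ 2 f (Iic L))
    (hode : ∀ x ∈ Iic L, derivWithin (derivWithin f (Iic L)) (Iic L) x = lam ^ 2 * f x) :
    derivWithin f (Iic L) L = lam * f L := by
  have hconv : Convex ℝ (Iic L) := convex_Iic L
  have hU : UniqueDiffOn ℝ (Iic L) := uniqueDiffOn_Iic L
  have hLS : L ∈ Iic L := self_mem_Iic
  obtain ⟨P, hP⟩ : ∃ p : ℝ,
      p = (derivWithin f (Iic L) L - lam * f L) * Real.exp (lam * L) := ⟨_, rfl⟩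
  obtain ⟨Q, hQ⟩ : ∃ q : ℝ,
      q = (derivWithin f (Iic L) L + lam * f L) * Real.exp (-(lam * L)) := ⟨_, rfl⟩
  have hid := half_line_identity hconv hU hLS hf hode
  rw [← hP, ← hQ] at hid
  have hM : 0 ≤ M := le_trans (abs_nonneg _) (hb L hLS)
  have hpt : ∀ x ≤ L,
      |P| ≤ (|Q| * Real.exp (lam * x) + 2 * lam * M) * Real.exp (lam * x) := by
    intro x hx
    have hid' := hid x hx
    have h1 : |P| * Real.exp (-(lam * x)) ≤ |Q| * Real.exp (lam * x) + 2 * lam * M := by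
      have heq : P * Real.exp (-(lam * x)) = Q * Real.exp (lam * x) - 2 * lam * f x := by
        linarith
      calc |P| * Real.exp (-(lam * x)) = |P * Real.exp (-(lam * x))| := by
            rw [abs_mul, abs_of_pos (Real.exp_pos _)]
        _ = |Q * Real.exp (lam * x) - 2 * lam * f x| := by rw [heq]
        _ ≤ |Q * Real.exp (lam * x)| + |2 * lam * f x| := abs_sub _ _
        _ ≤ |Q| * Real.exp (lam * x) + 2 * lam * M := by
            have e1 : |Q * Real.exp (lam * x)| = |Q| * Real.exp (lam * x) := by
              rw [abs_mul, abs_of_pos (Real.exp_pos _)]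
            have e2 : |2 * lam * f x| = 2 * lam * |f x| := by
              rw [abs_mul, abs_of_pos (by linarith : (0:ℝ) < 2 * lam)]
            have := hb x hx
            rw [e1, e2]
            nlinarith
    have e1 : Real.exp (-(lam * x)) * Real.exp (lam * x) = 1 := by
      rw [← Real.exp_add]; norm_num
    nlinarith [mul_le_mul_of_nonneg_right h1 (Real.exp_pos (lam * x)).le, e1,
      abs_nonneg P, Real.exp_pos (lam * x), Real.exp_pos (-(lam * x))]
  have hexp0 : Tendsto (fun x : ℝ => Real.exp (lam * x)) atBot (nhds 0) :=
    Real.tendsto_exp_atBot.comp ((tendsto_const_mul_atBot_of_pos hlam).2 tendsto_id)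
  have htend : Tendsto
      (fun x => (|Q| * Real.exp (lam * x) + 2 * lam * M) * Real.exp (lam * x))
      atBot (nhds 0) := by
    have := ((hexp0.const_mul |Q|).add (tendsto_const_nhds (x := 2 * lam * M))).mul hexp0
    simpa using this
  have hP0 : |P| ≤ 0 :=
    ge_of_tendsto htend (eventually_atBot.2 ⟨L, fun x hx => hpt x hx⟩)
  have hPz : P = 0 := abs_eq_zero.mp (le_antisymm hP0 (abs_nonneg _))
  rw [hP] at hPz
  rcases mul_eq_zero.mp hPz with h | h
  · linarith
  · exact absurd h (Real.exp_ne_zero _)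

private lemma ici_deriv_eq {lam L : ℝ} (hlam : 0 < lam) {f : ℝ → ℝ}
    {M : ℝ} (hb : ∀ x ∈ Ici L, |f x| ≤ M)
    (hf : ContDiffOn ℝ 2 f (Ici L))
    (hode : ∀ x ∈ Ici L, derivWithin (derivWithin f (Ici L)) (Ici L) x = lam ^ 2 * f x) :
    derivWithin f (Ici L) L = -lam * f L := by
  have hconv : Convex ℝ (Ici L) := convex_Ici L
  have hU : UniqueDiffOn ℝ (Ici L) := uniqueDiffOn_Ici L
  have hLS : L ∈ Ici L := self_mem_Ici
  obtain ⟨P, hP⟩ : ∃ p : ℝ,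
      p = (derivWithin f (Ici L) L - lam * f L) * Real.exp (lam * L) := ⟨_, rfl⟩
  obtain ⟨Q, hQ⟩ : ∃ q : ℝ,
      q = (derivWithin f (Ici L) L + lam * f L) * Real.exp (-(lam * L)) := ⟨_, rfl⟩
  have hid := half_line_identity hconv hU hLS hf hode
  rw [← hP, ← hQ] at hid
  have hM : 0 ≤ M := le_trans (abs_nonneg _) (hb L hLS)
  have hpt : ∀ x, L ≤ x →
      |Q| ≤ (|P| * Real.exp (-(lam * x)) + 2 * lam * M) * Real.exp (-(lam * x)) := by
    intro x hx
    have hid' := hid x hx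
    have h1 : |Q| * Real.exp (lam * x) ≤ |P| * Real.exp (-(lam * x)) + 2 * lam * M := by
      have heq : Q * Real.exp (lam * x) = P * Real.exp (-(lam * x)) + 2 * lam * f x := by
        linarith
      calc |Q| * Real.exp (lam * x) = |Q * Real.exp (lam * x)| := by
            rw [abs_mul, abs_of_pos (Real.exp_pos _)]
        _ = |P * Real.exp (-(lam * x)) + 2 * lam * f x| := by rw [heq]
        _ ≤ |P * Real.exp (-(lam * x))| + |2 * lam * f x| := abs_add_le _ _
        _ ≤ |P| * Real.exp (-(lam * x)) + 2 * lam * M := by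
            have e1 : |P * Real.exp (-(lam * x))| = |P| * Real.exp (-(lam * x)) := by
              rw [abs_mul, abs_of_pos (Real.exp_pos _)]
            have e2 : |2 * lam * f x| = 2 * lam * |f x| := by
              rw [abs_mul, abs_of_pos (by linarith : (0:ℝ) < 2 * lam)]
            have := hb x hx
            rw [e1, e2]
            nlinarith
    have e1 : Real.exp (lam * x) * Real.exp (-(lam * x)) = 1 := by
      rw [← Real.exp_add]; norm_num
    nlinarith [mul_le_mul_of_nonneg_right h1 (Real.exp_pos (-(lam * x))).le, e1,
      abs_nonneg Q, Real.exp_pos (lam * x), Real.exp_pos (-(lam * x))]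
  have hexp0 : Tendsto (fun x : ℝ => Real.exp (-(lam * x))) atTop (nhds 0) := by
    have hlin : Tendsto (fun x : ℝ => -(lam * x)) atTop atBot := by
      have := (tendsto_const_mul_atTop_of_pos hlam).2 (tendsto_id (α := ℝ))
      exact tendsto_neg_atBot_iff.mpr this
    exact Real.tendsto_exp_atBot.comp hlin
  have htend : Tendsto
      (fun x => (|P| * Real.exp (-(lam * x)) + 2 * lam * M) * Real.exp (-(lam * x)))
      atTop (nhds 0) := by
    have := ((hexp0.const_mul |P|).add (tendsto_const_nhds (x := 2 * lam * M))).mul hexp0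
    simpa using this
  have hQ0 : |Q| ≤ 0 :=
    ge_of_tendsto htend (eventually_atTop.2 ⟨L, fun x hx => hpt x hx⟩)
  have hQz : Q = 0 := abs_eq_zero.mp (le_antisymm hQ0 (abs_nonneg _))
  rw [hQ] at hQz
  rcases mul_eq_zero.mp hQz with h | h
  · linarith
  · exact absurd h (Real.exp_ne_zero _)

theorem dnwr_delay_parabolic_convergence
    (ν τ a₁ a₂ L θ s : ℝ) (hν : 0 < ν) (hτ : 0 < τ)
    (hσ : 0 < s + a₁ + a₂ * Real.exp (-τ * s))
    (h : ℕ → ℝ)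
    (hiter : ∀ k : ℕ, ∃ e₁ e₂ : ℝ → ℝ,
      (∃ M : ℝ, ∀ x ∈ Iic L, |e₁ x| ≤ M) ∧
      ContDiffOn ℝ 2 e₁ (Iic L) ∧
      (∀ x ∈ Iic L, ν ^ 2 * derivWithin (derivWithin e₁ (Iic L)) (Iic L) x
          = (s + a₁ + a₂ * Real.exp (-τ * s)) * e₁ x) ∧
      e₁ L = h k ∧
      (∃ M : ℝ, ∀ x ∈ Ici L, |e₂ x| ≤ M) ∧
      ContDiffOn ℝ 2 e₂ (Ici L) ∧
      (∀ x ∈ Ici L, ν ^ 2 * derivWithin (derivWithin e₂ (Ici L)) (Ici L) x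
          = (s + a₁ + a₂ * Real.exp (-τ * s)) * e₂ x) ∧
      derivWithin e₂ (Ici L) L = derivWithin e₁ (Iic L) L ∧
      h (k + 1) = θ * e₂ L + (1 - θ) * h k) :
    (∀ k : ℕ, h k = (1 - 2 * θ) ^ k * h 0) ∧
    (θ = 1 / 2 → ∀ k : ℕ, 1 ≤ k → h k = 0) ∧
    (0 < θ → θ < 1 →
      (∀ k : ℕ, |h k| ≤ |1 - 2 * θ| ^ k * |h 0|) ∧
      Tendsto h atTop (nhds 0)) := by
  set σ := s + a₁ + a₂ * Real.exp (-τ * s) with hσdef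
  set lam := Real.sqrt σ / ν with hlamdef
  have hlam : 0 < lam := div_pos (Real.sqrt_pos.2 hσ) hν
  have hlamsq : lam ^ 2 = σ / ν ^ 2 := by
    rw [hlamdef, div_pow, Real.sq_sqrt hσ.le]
  have hν2 : (0:ℝ) < ν ^ 2 := by positivity
  have hrec : ∀ k : ℕ, h (k + 1) = (1 - 2 * θ) * h k := by
    intro k
    obtain ⟨e₁, e₂, ⟨M₁, hb₁⟩, hc₁, hode₁, hL₁, ⟨M₂, hb₂⟩, hc₂, hode₂, hder, hup⟩ := hiter k
    have hode₁' : ∀ x ∈ Iic L, derivWithin (derivWithin e₁ (Iic L)) (Iic L) x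
        = lam ^ 2 * e₁ x := by
      intro x hx
      rw [hlamsq, div_mul_eq_mul_div, eq_div_iff (ne_of_gt hν2)]
      have := hode₁ x hx
      linarith
    have hode₂' : ∀ x ∈ Ici L, derivWithin (derivWithin e₂ (Ici L)) (Ici L) x
        = lam ^ 2 * e₂ x := by
      intro x hx
      rw [hlamsq, div_mul_eq_mul_div, eq_div_iff (ne_of_gt hν2)]
      have := hode₂ x hx
      linarith
    have hd₁ : derivWithin e₁ (Iic L) L = lam * e₁ L := iic_deriv_eq hlam hb₁ hc₁ hode₁'
    have hd₂ : derivWithin e₂ (Ici L) L = -lam * e₂ L := ici_deriv_eq hlam hb₂ hc₂ hode₂'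
    have he₂L : e₂ L = -h k := by
      have h0 : -lam * e₂ L = lam * h k := by rw [← hd₂, hder, hd₁, hL₁]
      have h2 : lam * e₂ L = lam * (-h k) := by linarith
      exact mul_left_cancel₀ (ne_of_gt hlam) h2
    rw [hup, he₂L]; ring
  have hmain : ∀ k : ℕ, h k = (1 - 2 * θ) ^ k * h 0 := by
    intro k
    induction k with
    | zero => simp
    | succ n ih => rw [hrec n, ih, pow_succ]; ring
  refine ⟨hmain, ?_, ?_⟩
  · intro hθ k hk
    rw [hmain k, hθ]
    have h12 : (1 - 2 * (1/2:ℝ)) = 0 := by norm_num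
    rw [h12, zero_pow (by omega : k ≠ 0), zero_mul]
  · intro hθ0 hθ1
    constructor
    · intro k
      rw [hmain k, abs_mul, abs_pow]
    · have habs : |1 - 2 * θ| < 1 := by
        rw [abs_lt]; constructor <;> linarith
      have ht := (tendsto_pow_atTop_nhds_zero_iff.2 habs).mul_const (h 0)
      rw [zero_mul] at ht
      exact ht.congr (fun k => (hmain k).symm)
end

section
/- Let ν > 0, τ > 0, a₁, a₂, L, θ ∈ ℝ, and let s ∈ ℝ be such that σ := s + a₁ + a₂·e^{−τs} > 0. Let (g_k)_{k≥0} be a sequence of real numbers and suppose that for every k ≥ 1 there exist functions e₁ᵏ, φ₁ᵏ (bounded and twice continuously differentiable on (−∞, L], satisfying ν²·f'' = σ·f there) and e₂ᵏ, φ₂ᵏ (bounded and twice continuously differentiable on [L, ∞), satisfying ν²·f'' = σ·f there) such that e₁ᵏ(L) = g_{k−1}, e₂ᵏ(L) = g_{k−1}, (φ₁ᵏ)'(L) = (e₁ᵏ)'(L) − (e₂ᵏ)'(L), −(φ₂ᵏ)'(L) = (e₁ᵏ)'(L) − (e₂ᵏ)'(L) (one-sided derivatives), and g_k = g_{k−1}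 − θ·(φ₁ᵏ(L) + φ₂ᵏ(L)). Then g_k = (1 − 4θ)ᵏ·g_0 for all k ≥ 0. Consequently, if θ = 1/4 then g_k = 0 for all k ≥ 1, and if 0 < θ < 1/2 then |g_k| ≤ |1 − 4θ|ᵏ·|g_0| and g_k → 0 as k → ∞. -/
open Set Filter

/-- If `|c| * exp (μ n)` is bounded for all naturals `n` with `μ > 0`, then `c = 0`. -/
private lemma aux_exp_unbounded {c C μ : ℝ} (hμ : 0 < μ)
    (h : ∀ n : ℕ, |c| * Real.exp (μ * n) ≤ C) : c = 0 := by
  by_contra hc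
  have hc' : 0 < |c| := abs_pos.mpr hc
  obtain ⟨n, hn⟩ := exists_nat_gt (C / |c| / μ)
  have h1 : μ * n + 1 ≤ Real.exp (μ * n) := Real.add_one_le_exp _
  have h2 := h n
  have h3 : C / |c| / μ < (n : ℝ) := hn
  have h4 : C / |c| < μ * n := by
    rw [div_lt_iff₀ hμ] at h3; linarith [h3]
  have h5 : C < |c| * (μ * n) := by
    rw [div_lt_iff₀ hc'] at h4; linarith [h4]
  nlinarith [Real.exp_pos (μ * (n : ℝ))]

/-- Constancy of the two exponential combinations for solutions of `f'' = μ² f`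
on a convex set with unique differentiability. -/
private lemma aux_ode_const {S : Set ℝ} (hU : UniqueDiffOn ℝ S) (hconv : Convex ℝ S)
    {μ L : ℝ} (hL : L ∈ S) {f : ℝ → ℝ}
    (hf : ContDiffOn ℝ 2 f S)
    (hode : ∀ x ∈ S, derivWithin (derivWithin f S) S x = μ ^ 2 * f x) :
    ∀ x ∈ S,
      derivWithin f S x - μ * f x
        = (derivWithin f S L - μ * f L) * Real.exp (μ * (L - x)) ∧
      derivWithin f S x + μ * f x
        = (derivWithin f S L + μ * f L) * Real.exp (μ * (x - L)) := by
  set f1 := derivWithin f S with hf1def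
  have hdf : ∀ x ∈ S, HasDerivWithinAt f (f1 x) S x := fun x hx =>
    ((hf.differentiableOn (by norm_num)) x hx).hasDerivWithinAt
  have hf1 : ContDiffOn ℝ 1 f1 S := hf.derivWithin hU (by norm_num)
  have hdf1 : ∀ x ∈ S, HasDerivWithinAt f1 (μ ^ 2 * f x) S x := fun x hx => by
    have h := ((hf1.differentiableOn (by norm_num)) x hx).hasDerivWithinAt
    rwa [hode x hx] at h
  -- p x = (f1 x - μ f x) * exp (μ x) has zero derivative
  have hp : ∀ x ∈ S,
      HasDerivWithinAt (fun x => (f1 x - μ * f x) * Real.exp (μ * x)) 0 S x := by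
    intro x hx
    have hexp : HasDerivWithinAt (fun x => Real.exp (μ * x))
        (Real.exp (μ * x) * μ) S x := by
      simpa using (((hasDerivAt_id x).const_mul μ).exp).hasDerivWithinAt
    have h := (((hdf1 x hx).sub ((hdf x hx).const_mul μ)).mul hexp)
    exact h.congr_deriv (by simp only [Pi.sub_apply, Pi.add_apply]; ring)
  -- q x = (f1 x + μ f x) * exp (-(μ x)) has zero derivative
  have hq : ∀ x ∈ S,
      HasDerivWithinAt (fun x => (f1 x + μ * f x) * Real.exp (-(μ * x))) 0 S x := by
    intro x hx
    have hexp : HasDerivWithinAt (fun x => Real.exp (-(μ * x)))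
        (Real.exp (-(μ * x)) * (-μ)) S x := by
      simpa using ((((hasDerivAt_id x).const_mul μ).neg).exp).hasDerivWithinAt
    have h := (((hdf1 x hx).add ((hdf x hx).const_mul μ)).mul hexp)
    exact h.congr_deriv (by simp only [Pi.sub_apply, Pi.add_apply]; ring)
  intro x hx
  have hpc : (f1 x - μ * f x) * Real.exp (μ * x)
      = (f1 L - μ * f L) * Real.exp (μ * L) := by
    have h := hconv.norm_image_sub_le_of_norm_hasDerivWithin_le (C := 0) hp
      (fun y _ => by simp) hL hx
    simp only [Real.norm_eq_abs, zero_mul] at h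
    have := abs_nonpos_iff.mp h
    linarith [sub_eq_zero.mp this]
  have hqc : (f1 x + μ * f x) * Real.exp (-(μ * x))
      = (f1 L + μ * f L) * Real.exp (-(μ * L)) := by
    have h := hconv.norm_image_sub_le_of_norm_hasDerivWithin_le (C := 0) hq
      (fun y _ => by simp) hL hx
    simp only [Real.norm_eq_abs, zero_mul] at h
    have := abs_nonpos_iff.mp h
    linarith [sub_eq_zero.mp this]
  constructor
  · have h := mul_right_cancel₀ (Real.exp_ne_zero (μ * x))
      (show (f1 x - μ * f x) * Real.exp (μ * x)
        = (f1 L - μ * f L) * Real.exp (μ * (L - x)) * Real.exp (μ * x) by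
          rw [hpc, mul_assoc, ← Real.exp_add,
            show μ * (L - x) + μ * x = μ * L by ring])
    exact h
  · have h := mul_right_cancel₀ (Real.exp_ne_zero (-(μ * x)))
      (show (f1 x + μ * f x) * Real.exp (-(μ * x))
        = (f1 L + μ * f L) * Real.exp (μ * (x - L)) * Real.exp (-(μ * x)) by
          rw [hqc, mul_assoc, ← Real.exp_add,
            show μ * (x - L) + -(μ * x) = -(μ * L) by ring])
    exact h

/-- Bounded solution of `f'' = μ² f` on `(-∞, L]` satisfies `f'(L) = μ f(L)`. -/
private lemma aux_left_flux {μ L : ℝ} (hμ : 0 < μ) {f : ℝ → ℝ}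
    (hb : ∃ M : ℝ, ∀ x ∈ Iic L, |f x| ≤ M)
    (hf : ContDiffOn ℝ 2 f (Iic L))
    (hode : ∀ x ∈ Iic L, derivWithin (derivWithin f (Iic L)) (Iic L) x = μ ^ 2 * f x) :
    derivWithin f (Iic L) L = μ * f L := by
  obtain ⟨M, hM⟩ := hb
  have hkey := aux_ode_const (uniqueDiffOn_Iic L) (convex_Iic L)
    (self_mem_Iic : L ∈ Iic L) hf hode
  set c := derivWithin f (Iic L) L - μ * f L with hc
  set d := derivWithin f (Iic L) L + μ * f L with hd
  have hzero : c = 0 := by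
    apply aux_exp_unbounded hμ (C := |d| + 2 * μ * M)
    intro n
    have hxS : L - (n : ℝ) ∈ Iic L := by
      simp [Nat.cast_nonneg]
    obtain ⟨h1, h2⟩ := hkey (L - n) hxS
    have hLx : μ * (L - (L - (n : ℝ))) = μ * n := by ring
    rw [hLx] at h1
    -- c * exp (μ n) = d * exp (μ (x - L)) - 2 μ f x
    have hrel : c * Real.exp (μ * n)
        = d * Real.exp (μ * ((L - (n : ℝ)) - L)) - 2 * μ * f (L - n) := by
      rw [← h1, ← h2]; ring
    have habs : |c| * Real.exp (μ * n) = |c * Real.exp (μ * n)| := by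
      rw [abs_mul, abs_of_pos (Real.exp_pos _)]
    rw [habs, hrel]
    have hexp1 : Real.exp (μ * ((L - (n : ℝ)) - L)) ≤ 1 := by
      apply Real.exp_le_one_iff.mpr
      have : (L - (n : ℝ)) - L = -(n : ℝ) := by ring
      rw [this]
      have : (0 : ℝ) ≤ (n : ℝ) := Nat.cast_nonneg n
      nlinarith
    have hfb := hM (L - n) hxS
    have hexp2 : (0 : ℝ) < Real.exp (μ * ((L - (n : ℝ)) - L)) := Real.exp_pos _
    calc |d * Real.exp (μ * ((L - (n : ℝ)) - L)) - 2 * μ * f (L - n)|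
        ≤ |d * Real.exp (μ * ((L - (n : ℝ)) - L))| + |2 * μ * f (L - n)| := abs_sub _ _
      _ ≤ |d| + 2 * μ * M := by
          rw [abs_mul, abs_mul]
          have h3 : |d| * |Real.exp (μ * ((L - (n : ℝ)) - L))| ≤ |d| * 1 := by
            apply mul_le_mul_of_nonneg_left _ (abs_nonneg d)
            rw [abs_of_pos hexp2]; exact hexp1
          have h4 : |(2 : ℝ) * μ| * |f (L - n)| ≤ 2 * μ * M := by
            rw [abs_of_pos (by linarith : (0:ℝ) < 2 * μ)]
            exact mul_le_mul_of_nonneg_left hfb (by linarith)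
          linarith
  linarith [hzero, hc ▸ hzero]

/-- Bounded solution of `f'' = μ² f` on `[L, ∞)` satisfies `f'(L) = -μ f(L)`. -/
private lemma aux_right_flux {μ L : ℝ} (hμ : 0 < μ) {f : ℝ → ℝ}
    (hb : ∃ M : ℝ, ∀ x ∈ Ici L, |f x| ≤ M)
    (hf : ContDiffOn ℝ 2 f (Ici L))
    (hode : ∀ x ∈ Ici L, derivWithin (derivWithin f (Ici L)) (Ici L) x = μ ^ 2 * f x) :
    derivWithin f (Ici L) L = -(μ * f L) := by
  obtain ⟨M, hM⟩ := hb
  have hkey := aux_ode_const (uniqueDiffOn_Ici L) (convex_Ici L)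
    (self_mem_Ici : L ∈ Ici L) hf hode
  set c := derivWithin f (Ici L) L - μ * f L with hc
  set d := derivWithin f (Ici L) L + μ * f L with hd
  have hzero : d = 0 := by
    apply aux_exp_unbounded hμ (C := |c| + 2 * μ * M)
    intro n
    have hxS : L + (n : ℝ) ∈ Ici L := by
      simp [Nat.cast_nonneg]
    obtain ⟨h1, h2⟩ := hkey (L + n) hxS
    have hLx : μ * ((L + (n : ℝ)) - L) = μ * n := by ring
    rw [hLx] at h2
    have hrel : d * Real.exp (μ * n)
        = c * Real.exp (μ * (L - (L + (n : ℝ)))) + 2 * μ * f (L + n) := by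
      rw [← h1, ← h2]; ring
    have habs : |d| * Real.exp (μ * n) = |d * Real.exp (μ * n)| := by
      rw [abs_mul, abs_of_pos (Real.exp_pos _)]
    rw [habs, hrel]
    have hexp1 : Real.exp (μ * (L - (L + (n : ℝ)))) ≤ 1 := by
      apply Real.exp_le_one_iff.mpr
      have : L - (L + (n : ℝ)) = -(n : ℝ) := by ring
      rw [this]
      have : (0 : ℝ) ≤ (n : ℝ) := Nat.cast_nonneg n
      nlinarith
    have hfb := hM (L + n) hxS
    have hexp2 : (0 : ℝ) < Real.exp (μ * (L - (L + (n : ℝ)))) := Real.exp_pos _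
    calc |c * Real.exp (μ * (L - (L + (n : ℝ)))) + 2 * μ * f (L + n)|
        ≤ |c * Real.exp (μ * (L - (L + (n : ℝ))))| + |2 * μ * f (L + n)| := abs_add_le _ _
      _ ≤ |c| + 2 * μ * M := by
          rw [abs_mul, abs_mul]
          have h3 : |c| * |Real.exp (μ * (L - (L + (n : ℝ))))| ≤ |c| * 1 := by
            apply mul_le_mul_of_nonneg_left _ (abs_nonneg c)
            rw [abs_of_pos hexp2]; exact hexp1
          have h4 : |(2 : ℝ) * μ| * |f (L + n)| ≤ 2 * μ * M := by
            rw [abs_of_pos (by linarith : (0:ℝ) < 2 * μ)]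
            exact mul_le_mul_of_nonneg_left hfb (by linarith)
          linarith
  linarith [hzero]

theorem nnwr_delay_parabolic_convergence
    (ν τ a₁ a₂ L θ s : ℝ) (hν : 0 < ν) (hτ : 0 < τ)
    (hσ : 0 < s + a₁ + a₂ * Real.exp (-τ * s))
    (g : ℕ → ℝ)
    (hiter : ∀ k : ℕ, ∃ e₁ φ₁ e₂ φ₂ : ℝ → ℝ,
      (∃ M : ℝ, ∀ x ∈ Iic L, |e₁ x| ≤ M) ∧
      ContDiffOn ℝ 2 e₁ (Iic L) ∧
      (∀ x ∈ Iic L, ν ^ 2 * derivWithin (derivWithin e₁ (Iic L)) (Iic L) x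
          = (s + a₁ + a₂ * Real.exp (-τ * s)) * e₁ x) ∧
      (∃ M : ℝ, ∀ x ∈ Iic L, |φ₁ x| ≤ M) ∧
      ContDiffOn ℝ 2 φ₁ (Iic L) ∧
      (∀ x ∈ Iic L, ν ^ 2 * derivWithin (derivWithin φ₁ (Iic L)) (Iic L) x
          = (s + a₁ + a₂ * Real.exp (-τ * s)) * φ₁ x) ∧
      (∃ M : ℝ, ∀ x ∈ Ici L, |e₂ x| ≤ M) ∧
      ContDiffOn ℝ 2 e₂ (Ici L) ∧
      (∀ x ∈ Ici L, ν ^ 2 * derivWithin (derivWithin e₂ (Ici L)) (Ici L) x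
          = (s + a₁ + a₂ * Real.exp (-τ * s)) * e₂ x) ∧
      (∃ M : ℝ, ∀ x ∈ Ici L, |φ₂ x| ≤ M) ∧
      ContDiffOn ℝ 2 φ₂ (Ici L) ∧
      (∀ x ∈ Ici L, ν ^ 2 * derivWithin (derivWithin φ₂ (Ici L)) (Ici L) x
          = (s + a₁ + a₂ * Real.exp (-τ * s)) * φ₂ x) ∧
      e₁ L = g k ∧ e₂ L = g k ∧
      derivWithin φ₁ (Iic L) L
        = derivWithin e₁ (Iic L) L - derivWithin e₂ (Ici L) L ∧
      -derivWithin φ₂ (Ici L) L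
        = derivWithin e₁ (Iic L) L - derivWithin e₂ (Ici L) L ∧
      g (k + 1) = g k - θ * (φ₁ L + φ₂ L)) :
    (∀ k : ℕ, g k = (1 - 4 * θ) ^ k * g 0) ∧
    (θ = 1 / 4 → ∀ k : ℕ, 1 ≤ k → g k = 0) ∧
    (0 < θ → θ < 1 / 2 →
      (∀ k : ℕ, |g k| ≤ |1 - 4 * θ| ^ k * |g 0|) ∧
      Tendsto g atTop (nhds 0)) := by
  set σ := s + a₁ + a₂ * Real.exp (-τ * s) with hσdef
  set μ := Real.sqrt σ / ν with hμdef
  have hμ : 0 < μ := div_pos (Real.sqrt_pos.mpr hσ) hν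
  have hμsq : ∀ x : ℝ, σ * x = ν ^ 2 * (μ ^ 2 * x) := by
    intro x
    have h1 : μ ^ 2 = σ / ν ^ 2 := by
      rw [hμdef, div_pow, Real.sq_sqrt hσ.le]
    rw [h1]
    field_simp
  have hstep : ∀ k : ℕ, g (k + 1) = (1 - 4 * θ) * g k := by
    intro k
    obtain ⟨e₁, φ₁, e₂, φ₂, hb₁, hc₁, ho₁, hbφ₁, hcφ₁, hoφ₁, hb₂, hc₂, ho₂, hbφ₂, hcφ₂,
      hoφ₂, hE₁, hE₂, hN₁, hN₂, hG⟩ := hiter k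
    have hν2 : (ν : ℝ) ^ 2 ≠ 0 := by positivity
    -- convert ODEs to f'' = μ² f form
    have ho₁' : ∀ x ∈ Iic L, derivWithin (derivWithin e₁ (Iic L)) (Iic L) x
        = μ ^ 2 * e₁ x := fun x hx => by
      have h := ho₁ x hx
      rw [hμsq (e₁ x)] at h
      exact mul_left_cancel₀ hν2 h
    have hoφ₁' : ∀ x ∈ Iic L, derivWithin (derivWithin φ₁ (Iic L)) (Iic L) x
        = μ ^ 2 * φ₁ x := fun x hx => by
      have h := hoφ₁ x hx
      rw [hμsq (φ₁ x)] at h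
      exact mul_left_cancel₀ hν2 h
    have ho₂' : ∀ x ∈ Ici L, derivWithin (derivWithin e₂ (Ici L)) (Ici L) x
        = μ ^ 2 * e₂ x := fun x hx => by
      have h := ho₂ x hx
      rw [hμsq (e₂ x)] at h
      exact mul_left_cancel₀ hν2 h
    have hoφ₂' : ∀ x ∈ Ici L, derivWithin (derivWithin φ₂ (Ici L)) (Ici L) x
        = μ ^ 2 * φ₂ x := fun x hx => by
      have h := hoφ₂ x hx
      rw [hμsq (φ₂ x)] at h
      exact mul_left_cancel₀ hν2 h
    have he₁ : derivWithin e₁ (Iic L) L = μ * g k := by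
      rw [← hE₁]; exact aux_left_flux hμ hb₁ hc₁ ho₁'
    have he₂ : derivWithin e₂ (Ici L) L = -(μ * g k) := by
      rw [← hE₂]; exact aux_right_flux hμ hb₂ hc₂ ho₂'
    have hφ₁flux : derivWithin φ₁ (Iic L) L = μ * φ₁ L :=
      aux_left_flux hμ hbφ₁ hcφ₁ hoφ₁'
    have hφ₂flux : derivWithin φ₂ (Ici L) L = -(μ * φ₂ L) :=
      aux_right_flux hμ hbφ₂ hcφ₂ hoφ₂'
    have hφ₁L : φ₁ L = 2 * g k := by
      have h : μ * φ₁ L = μ * (2 * g k) := by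
        rw [← hφ₁flux, hN₁, he₁, he₂]; ring
      exact mul_left_cancel₀ hμ.ne' h
    have hφ₂L : φ₂ L = 2 * g k := by
      have h : μ * φ₂ L = μ * (2 * g k) := by
        have := hN₂
        rw [hφ₂flux, he₁, he₂] at this
        linarith [this]
      exact mul_left_cancel₀ hμ.ne' h
    rw [hG, hφ₁L, hφ₂L]; ring
  have hmain : ∀ k : ℕ, g k = (1 - 4 * θ) ^ k * g 0 := by
    intro k
    induction k with
    | zero => simp
    | succ n ih => rw [hstep n, ih, pow_succ]; ring
  refine ⟨hmain, ?_, ?_⟩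
  · intro hθ k hk
    rw [hmain k, hθ]
    have : (1 : ℝ) - 4 * (1 / 4) = 0 := by norm_num
    rw [this, zero_pow (by omega : k ≠ 0), zero_mul]
  · intro h1 h2
    constructor
    · intro k
      rw [hmain k, abs_mul, abs_pow]
    · have hr : |1 - 4 * θ| < 1 := by
        rw [abs_lt]; constructor <;> linarith
      have ht : Tendsto (fun k : ℕ => (1 - 4 * θ) ^ k * g 0) atTop (nhds 0) := by
        have := (tendsto_pow_atTop_nhds_zero_iff.mpr hr).mul_const (g 0)
        simpa using this
      exact ht.congr (fun k => (hmain k).symm)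
end

section
/- Let μ > 0, a > 0, b > 0 and h ∈ ℝ. Suppose e₁ : ℝ → ℝ is twice continuously differentiable on [−a, 0], satisfies e₁'' = μ²·e₁ on [−a, 0], e₁(−a) = 0 and e₁(0) = h; and suppose e₂ : ℝ → ℝ is twice continuously differentiable on [0, b], satisfies e₂'' = μ²·e₂ on [0, b], e₂(b) = 0 and e₂'(0) = e₁'(0) (one-sided derivatives at 0). Then e₂(0) = −coth(μa)·tanh(μb)·h. In particular, if a = b then e₂(0) = −h. -/
open Set Filter

/-- The hyperbolic cotangent. -/
noncomputable def coth (x : ℝ) : ℝ := Real.cosh x / Real.sinh x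

private lemma wronskian_const (μ l r c : ℝ) (hlr : l < r) (e : ℝ → ℝ)
    (hC2 : ContDiffOn ℝ 2 e (Icc l r))
    (hode : ∀ x ∈ Icc l r, derivWithin (derivWithin e (Icc l r)) (Icc l r) x = μ ^ 2 * e x)
    {x : ℝ} (hx : x ∈ Icc l r) :
    derivWithin e (Icc l r) x * Real.sinh (μ * (x - c)) - e x * (μ * Real.cosh (μ * (x - c)))
      = derivWithin e (Icc l r) l * Real.sinh (μ * (l - c))
        - e l * (μ * Real.cosh (μ * (l - c))) := by
  set s : Set ℝ := Icc l r with hs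
  have hu : UniqueDiffOn ℝ s := uniqueDiffOn_Icc hlr
  set g : ℝ → ℝ := derivWithin e s with hg
  have hC1g : ContDiffOn ℝ 1 g s := hC2.derivWithin hu (by norm_num)
  have hdiff_e : DifferentiableOn ℝ e s := hC2.differentiableOn (by norm_num)
  have hdiff_g : DifferentiableOn ℝ g s := hC1g.differentiableOn one_ne_zero
  set W : ℝ → ℝ := fun y =>
    g y * Real.sinh (μ * (y - c)) - e y * (μ * Real.cosh (μ * (y - c))) with hW
  have hWderiv : ∀ y ∈ s, HasDerivWithinAt W 0 s y := by
    intro y hy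
    have he : HasDerivWithinAt e (g y) s y := (hdiff_e y hy).hasDerivWithinAt
    have hgd : HasDerivWithinAt g (μ ^ 2 * e y) s y := by
      have := (hdiff_g y hy).hasDerivWithinAt
      rwa [show derivWithin g s y = μ ^ 2 * e y from hode y hy] at this
    have hlin : HasDerivAt (fun z : ℝ => μ * (z - c)) μ y := by
      simpa using ((hasDerivAt_id y).sub_const c).const_mul μ
    have hsinh : HasDerivAt (fun z : ℝ => Real.sinh (μ * (z - c)))
        (Real.cosh (μ * (y - c)) * μ) y := hlin.sinh
    have hcosh : HasDerivAt (fun z : ℝ => Real.cosh (μ * (z - c)))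
        (Real.sinh (μ * (y - c)) * μ) y := hlin.cosh
    have h1 : HasDerivWithinAt (fun z => g z * Real.sinh (μ * (z - c)))
        (μ ^ 2 * e y * Real.sinh (μ * (y - c)) + g y * (Real.cosh (μ * (y - c)) * μ)) s y :=
      hgd.mul (hsinh.hasDerivWithinAt)
    have h2 : HasDerivWithinAt (fun z => e z * (μ * Real.cosh (μ * (z - c))))
        (g y * (μ * Real.cosh (μ * (y - c))) + e y * (μ * (Real.sinh (μ * (y - c)) * μ))) s y :=
      he.mul ((hcosh.const_mul μ).hasDerivWithinAt)
    have := h1.sub h2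
    refine this.congr_deriv ?_
    ring
  have hWdiff : DifferentiableOn ℝ W s := fun y hy => (hWderiv y hy).differentiableWithinAt
  have hWzero : ∀ y ∈ Ico l r, derivWithin W s y = 0 := fun y hy =>
    (hWderiv y (Ico_subset_Icc_self hy)).derivWithin (hu y (Ico_subset_Icc_self hy))
  exact constant_of_derivWithin_zero hWdiff hWzero x hx

theorem dnwr_bounded_transmission
    (μ a b h : ℝ) (hμ : 0 < μ) (ha : 0 < a) (hb : 0 < b)
    (e₁ e₂ : ℝ → ℝ)
    (h1C2 : ContDiffOn ℝ 2 e₁ (Icc (-a) 0))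
    (h1ode : ∀ x ∈ Icc (-a) 0,
      derivWithin (derivWithin e₁ (Icc (-a) 0)) (Icc (-a) 0) x = μ ^ 2 * e₁ x)
    (h1bc : e₁ (-a) = 0) (h1int : e₁ 0 = h)
    (h2C2 : ContDiffOn ℝ 2 e₂ (Icc 0 b))
    (h2ode : ∀ x ∈ Icc 0 b,
      derivWithin (derivWithin e₂ (Icc 0 b)) (Icc 0 b) x = μ ^ 2 * e₂ x)
    (h2bc : e₂ b = 0)
    (hflux : derivWithin e₂ (Icc 0 b) 0 = derivWithin e₁ (Icc (-a) 0) 0) :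
    e₂ 0 = -(coth (μ * a) * Real.tanh (μ * b)) * h ∧
      (a = b → e₂ 0 = -h) := by
  have ha' : (-a : ℝ) < 0 := by linarith
  have hmem0 : (0 : ℝ) ∈ Icc (-a) 0 := by constructor <;> linarith
  have hmemb : b ∈ Icc (0 : ℝ) b := by constructor <;> linarith
  -- First interval, with c = -a:
  have H1 := wronskian_const μ (-a) 0 (-a) ha' e₁ h1C2 h1ode hmem0
  have H2 := wronskian_const μ 0 b b hb e₂ h2C2 h2ode hmemb
  set g1 := derivWithin e₁ (Icc (-a) 0) 0 with hg1
  set g2 := derivWithin e₂ (Icc 0 b) 0 with hg2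
  rw [h1bc, h1int] at H1
  rw [h2bc] at H2
  simp only [sub_neg_eq_add, neg_add_cancel, mul_zero, Real.sinh_zero, Real.cosh_zero,
    zero_sub, sub_zero, zero_mul, mul_one, sub_self] at H1 H2
  -- H1 : g1 * sinh (μ * a) - h * (μ * cosh (μ * a)) = 0 (roughly)
  -- H2 : 0 = g2 * sinh (μ * (-b)) - e₂ 0 * (μ * cosh (μ * (-b)))
  have hsa : Real.sinh (μ * a) > 0 := Real.sinh_pos_iff.2 (by positivity)
  have hca : Real.cosh (μ * a) > 0 := Real.cosh_pos _
  have hcb : Real.cosh (μ * b) > 0 := Real.cosh_pos _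
  have hsb := Real.sinh_neg (μ * b)
  have hcbneg := Real.cosh_neg (μ * b)
  have hmb : μ * -b = -(μ * b) := by ring
  rw [hmb, Real.sinh_neg, Real.cosh_neg] at H2
  rw [show μ * (0 + a) = μ * a by ring] at H1
  -- From H1: g1 * sinh(μa) = h * μ * cosh(μa)
  -- From H2: 0 = -g1 * sinh(μb) - e₂ 0 * μ cosh(μb)
  have key : e₂ 0 = -(coth (μ * a) * Real.tanh (μ * b)) * h := by
    have h1' : g1 * Real.sinh (μ * a) = h * (μ * Real.cosh (μ * a)) := by linarith
    rw [hflux] at H2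
    have h2' : e₂ 0 * (μ * Real.cosh (μ * b)) = -(g1 * Real.sinh (μ * b)) := by linarith
    have hg1v : g1 = h * μ * Real.cosh (μ * a) / Real.sinh (μ * a) := by
      field_simp at h1' ⊢; linarith
    rw [coth, Real.tanh_eq_sinh_div_cosh]
    rw [hg1v] at h2'
    field_simp at h2' ⊢
    apply mul_left_cancel₀ (ne_of_gt hμ)
    linear_combination μ * h2'
  refine ⟨key, fun hab => ?_⟩
  subst hab
  rw [key, coth, Real.tanh_eq_sinh_div_cosh]
  field_simp
end

section
/- Let μ > 0, a > 0, b > 0 and g ∈ ℝ. Suppose e₁ : ℝ → ℝ is twice continuously differentiable on [−a, 0], satisfies e₁'' = μ²·e₁ on [−a, 0], e₁(−a) = 0 and e₁(0) = g; and suppose e₂ : ℝ → ℝ is twice continuously differentiable on [0, b], satisfies e₂'' = μ²·e₂ on [0, b], e₂(b) = 0 and e₂(0) = g. Then e₁'(0) − e₂'(0) = μ·(coth(μa) + coth(μb))·g, where derivatives at 0 are one-sided. -/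
open Set Filter

/-- Wronskian of two solutions of `e'' = μ² e` is constant on `Icc c d`. -/
lemma wronskian_const_s10 (μ c d : ℝ) (hcd : c < d) (e s s' : ℝ → ℝ)
    (hC2 : ContDiffOn ℝ 2 e (Icc c d))
    (hode : ∀ x ∈ Icc c d,
      derivWithin (derivWithin e (Icc c d)) (Icc c d) x = μ ^ 2 * e x)
    (hs : ∀ x, HasDerivAt s (s' x) x)
    (hs' : ∀ x, HasDerivAt s' (μ ^ 2 * s x) x) :
    derivWithin e (Icc c d) d * s d - e d * s' d
      = derivWithin e (Icc c d) c * s c - e c * s' c := by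
  set I := Icc c d with hI
  have hu : UniqueDiffOn ℝ I := uniqueDiffOn_Icc hcd
  have hd1 : DifferentiableOn ℝ e I := hC2.differentiableOn (by norm_num)
  have hd2 : DifferentiableOn ℝ (derivWithin e I) I :=
    (hC2.derivWithin hu (m := 1) (by norm_num)).differentiableOn one_ne_zero
  set W : ℝ → ℝ := fun x => derivWithin e I x * s x - e x * s' x with hW
  have hWd : ∀ x ∈ I, HasDerivWithinAt W 0 I x := by
    intro x hx
    have h1 : HasDerivWithinAt e (derivWithin e I x) I x :=
      (hd1 x hx).hasDerivWithinAt
    have h2 : HasDerivWithinAt (derivWithin e I) (μ ^ 2 * e x) I x := by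
      have := (hd2 x hx).hasDerivWithinAt
      rwa [hode x hx] at this
    have h3 := (hs x).hasDerivWithinAt (s := I)
    have h4 := (hs' x).hasDerivWithinAt (s := I)
    have := (h2.mul h3).sub (h1.mul h4)
    exact this.congr_deriv (by ring)
  have hconst : ∀ x ∈ I, W x = W c := by
    apply constant_of_derivWithin_zero
    · exact fun x hx => (hWd x hx).differentiableWithinAt
    · intro x hx
      exact (hWd x (Ico_subset_Icc_self hx)).derivWithin
        (hu x (Ico_subset_Icc_self hx))
  exact hconst d (right_mem_Icc.2 hcd.le)

theorem nnwr_bounded_dirichlet_flux_jump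
    (μ a b g : ℝ) (hμ : 0 < μ) (ha : 0 < a) (hb : 0 < b)
    (e₁ e₂ : ℝ → ℝ)
    (h1C2 : ContDiffOn ℝ 2 e₁ (Icc (-a) 0))
    (h1ode : ∀ x ∈ Icc (-a) 0,
      derivWithin (derivWithin e₁ (Icc (-a) 0)) (Icc (-a) 0) x = μ ^ 2 * e₁ x)
    (h1bc : e₁ (-a) = 0) (h1int : e₁ 0 = g)
    (h2C2 : ContDiffOn ℝ 2 e₂ (Icc 0 b))
    (h2ode : ∀ x ∈ Icc 0 b,
      derivWithin (derivWithin e₂ (Icc 0 b)) (Icc 0 b) x = μ ^ 2 * e₂ x)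
    (h2bc : e₂ b = 0) (h2int : e₂ 0 = g) :
    derivWithin e₁ (Icc (-a) 0) 0 - derivWithin e₂ (Icc 0 b) 0
      = μ * (coth (μ * a) + coth (μ * b)) * g := by
  have hsha : 0 < Real.sinh (μ * a) := Real.sinh_pos_iff.2 (by positivity)
  have hshb : 0 < Real.sinh (μ * b) := Real.sinh_pos_iff.2 (by positivity)
  -- comparison solution for e₁ : s x = sinh (μ(x+a))
  have hlin1 : ∀ x : ℝ, HasDerivAt (fun x => μ * (x + a)) μ x := by
    intro x
    simpa using ((hasDerivAt_id x).add_const a).const_mul μ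
  have hs1 : ∀ x : ℝ, HasDerivAt (fun x => Real.sinh (μ * (x + a)))
      (μ * Real.cosh (μ * (x + a))) x := by
    intro x
    have := (Real.hasDerivAt_sinh (μ * (x + a))).comp x (hlin1 x)
    exact this.congr_deriv (by ring)
  have hs1' : ∀ x : ℝ, HasDerivAt (fun x => μ * Real.cosh (μ * (x + a)))
      (μ ^ 2 * Real.sinh (μ * (x + a))) x := by
    intro x
    have := ((Real.hasDerivAt_cosh (μ * (x + a))).comp x (hlin1 x)).const_mul μ
    exact this.congr_deriv (by ring)
  have hW1 := wronskian_const_s10 μ (-a) 0 (by linarith) e₁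
    (fun x => Real.sinh (μ * (x + a))) (fun x => μ * Real.cosh (μ * (x + a)))
    h1C2 h1ode hs1 hs1'
  simp only [h1bc, h1int, add_zero, neg_add_cancel, mul_zero, Real.sinh_zero,
    zero_mul, zero_add, sub_zero, zero_sub, neg_zero] at hW1
  -- hW1 : derivWithin e₁ (Icc (-a) 0) 0 * Real.sinh (μ * a) - g * (μ * Real.cosh (μ * a)) = 0
  -- comparison solution for e₂ : t x = sinh (μ(b - x))
  have hlin2 : ∀ x : ℝ, HasDerivAt (fun x => μ * (b - x)) (-μ) x := by
    intro x
    simpa using ((hasDerivAt_id x).const_sub b).const_mul μ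
  have hs2 : ∀ x : ℝ, HasDerivAt (fun x => Real.sinh (μ * (b - x)))
      (-(μ * Real.cosh (μ * (b - x)))) x := by
    intro x
    have := (Real.hasDerivAt_sinh (μ * (b - x))).comp x (hlin2 x)
    exact this.congr_deriv (by ring)
  have hs2' : ∀ x : ℝ, HasDerivAt (fun x => -(μ * Real.cosh (μ * (b - x))))
      (μ ^ 2 * Real.sinh (μ * (b - x))) x := by
    intro x
    have := (((Real.hasDerivAt_cosh (μ * (b - x))).comp x (hlin2 x)).const_mul μ).neg
    exact this.congr_deriv (by ring)
  have hW2 := wronskian_const_s10 μ 0 b hb e₂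
    (fun x => Real.sinh (μ * (b - x))) (fun x => -(μ * Real.cosh (μ * (b - x))))
    h2C2 h2ode hs2 hs2'
  simp only [h2bc, h2int, sub_self, sub_zero, mul_zero, Real.sinh_zero,
    zero_mul, zero_sub] at hW2
  -- solve for the two one-sided derivatives
  have hA : derivWithin e₁ (Icc (-a) 0) 0
      = μ * (Real.cosh (μ * a) / Real.sinh (μ * a)) * g := by
    field_simp at hW1 ⊢
    linarith [hW1]
  have hB : derivWithin e₂ (Icc 0 b) 0
      = -(μ * (Real.cosh (μ * b) / Real.sinh (μ * b)) * g) := by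
    field_simp at hW2 ⊢
    linarith [hW2]
  rw [hA, hB, coth, coth]
  field_simp
  ring
end

section
/- Let μ > 0, a > 0, b > 0 and θ ∈ ℝ. Let (h_k)_{k≥0} be a sequence of real numbers and suppose that for every k ≥ 1 there exist functions e₁ᵏ, e₂ᵏ : ℝ → ℝ such that: (i) e₁ᵏ is twice continuously differentiable on [−a, 0], satisfies (e₁ᵏ)'' = μ²·e₁ᵏ on [−a, 0], e₁ᵏ(−a) = 0 and e₁ᵏ(0) = h_{k−1}; (ii) e₂ᵏ is twice continuously differentiable on [0, b], satisfies (e₂ᵏ)'' = μ²·e₂ᵏ on [0, b], e₂ᵏ(b) = 0 and (e₂ᵏ)'(0) = (e₁ᵏ)'(0) (one-sided derivatives at 0); (iii) h_k = θ·e₂ᵏ(0) + (1 − θ)·h_{k−1}. Then h_k = (1 − θ − θ·coth(μa)·tanh(μb))ᵏ·h_0 for all k ≥ 0. -/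
open Set Filter

lemma ode_structure {μ l r : ℝ} (hlr : l < r) (f : ℝ → ℝ)
    (hf : ContDiffOn ℝ 2 f (Icc l r))
    (hode : ∀ x ∈ Icc l r,
      derivWithin (derivWithin f (Icc l r)) (Icc l r) x = μ ^ 2 * f x) :
    ∀ x ∈ Icc l r,
      μ * f x = μ * f l * Real.cosh (μ * (x - l))
            + derivWithin f (Icc l r) l * Real.sinh (μ * (x - l)) ∧
      derivWithin f (Icc l r) x
        = μ * f l * Real.sinh (μ * (x - l))
          + derivWithin f (Icc l r) l * Real.cosh (μ * (x - l)) := by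
  set s := Icc l r with hs_def
  have hs : UniqueDiffOn ℝ s := uniqueDiffOn_Icc hlr
  set f' := derivWithin f s with hf'_def
  have hfd : DifferentiableOn ℝ f s := hf.differentiableOn (by norm_num)
  have hf'c : ContDiffOn ℝ 1 f' s := hf.derivWithin hs (by norm_num)
  have hf'd : DifferentiableOn ℝ f' s := hf'c.differentiableOn one_ne_zero
  have key : ∀ x ∈ s, HasDerivWithinAt f (f' x) s x :=
    fun x hx => (hfd x hx).hasDerivWithinAt
  have key' : ∀ x ∈ s, HasDerivWithinAt f' (μ ^ 2 * f x) s x := by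
    intro x hx
    have := (hf'd x hx).hasDerivWithinAt
    rwa [hf'_def, hode x hx] at this
  have hlin : ∀ x : ℝ, HasDerivAt (fun y => μ * (y - l)) μ x := fun x => by
    simpa using ((hasDerivAt_id x).sub_const l).const_mul μ
  -- first conserved quantity
  have hC : ∀ x ∈ s, HasDerivWithinAt
      (fun y => μ * f y * Real.cosh (μ * (y - l)) - f' y * Real.sinh (μ * (y - l))) 0 s x := by
    intro x hx
    have h1 := ((key x hx).const_mul μ).mul (hlin x).cosh.hasDerivWithinAt
    have h2 := (key' x hx).mul (hlin x).sinh.hasDerivWithinAt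
    have h3 := h1.sub h2
    exact h3.congr_deriv (by ring)
  have hD : ∀ x ∈ s, HasDerivWithinAt
      (fun y => f' y * Real.cosh (μ * (y - l)) - μ * f y * Real.sinh (μ * (y - l))) 0 s x := by
    intro x hx
    have h1 := (key' x hx).mul (hlin x).cosh.hasDerivWithinAt
    have h2 := ((key x hx).const_mul μ).mul (hlin x).sinh.hasDerivWithinAt
    have h3 := h1.sub h2
    exact h3.congr_deriv (by ring)
  have hCconst : ∀ x ∈ s,
      μ * f x * Real.cosh (μ * (x - l)) - f' x * Real.sinh (μ * (x - l))
        = μ * f l := by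
    intro x hx
    have := constant_of_derivWithin_zero
      (f := fun y => μ * f y * Real.cosh (μ * (y - l)) - f' y * Real.sinh (μ * (y - l)))
      (a := l) (b := r)
      (fun y hy => (hC y hy).differentiableWithinAt)
      (fun y hy => (hC y (mem_Icc_of_Ico hy)).derivWithin (hs y (mem_Icc_of_Ico hy)))
      x hx
    simpa using this
  have hDconst : ∀ x ∈ s,
      f' x * Real.cosh (μ * (x - l)) - μ * f x * Real.sinh (μ * (x - l))
        = f' l := by
    intro x hx
    have := constant_of_derivWithin_zero
      (f := fun y => f' y * Real.cosh (μ * (y - l)) - μ * f y * Real.sinh (μ * (y - l)))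
      (a := l) (b := r)
      (fun y hy => (hD y hy).differentiableWithinAt)
      (fun y hy => (hD y (mem_Icc_of_Ico hy)).derivWithin (hs y (mem_Icc_of_Ico hy)))
      x hx
    simpa using this
  intro x hx
  have e1 := hCconst x hx
  have e2 := hDconst x hx
  have pyth := Real.cosh_sq_sub_sinh_sq (μ * (x - l))
  constructor
  · linear_combination Real.cosh (μ * (x - l)) * e1 + Real.sinh (μ * (x - l)) * e2
      - μ * f x * pyth
  · linear_combination Real.sinh (μ * (x - l)) * e1 + Real.cosh (μ * (x - l)) * e2
      - f' x * pyth

theorem dnwr_bounded_recurrence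
    (μ a b θ : ℝ) (hμ : 0 < μ) (ha : 0 < a) (hb : 0 < b)
    (h : ℕ → ℝ)
    (hiter : ∀ k : ℕ, ∃ e₁ e₂ : ℝ → ℝ,
      ContDiffOn ℝ 2 e₁ (Icc (-a) 0) ∧
      (∀ x ∈ Icc (-a) 0,
        derivWithin (derivWithin e₁ (Icc (-a) 0)) (Icc (-a) 0) x = μ ^ 2 * e₁ x) ∧
      e₁ (-a) = 0 ∧ e₁ 0 = h k ∧
      ContDiffOn ℝ 2 e₂ (Icc 0 b) ∧
      (∀ x ∈ Icc 0 b,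
        derivWithin (derivWithin e₂ (Icc 0 b)) (Icc 0 b) x = μ ^ 2 * e₂ x) ∧
      e₂ b = 0 ∧
      derivWithin e₂ (Icc 0 b) 0 = derivWithin e₁ (Icc (-a) 0) 0 ∧
      h (k + 1) = θ * e₂ 0 + (1 - θ) * h k) :
    ∀ k : ℕ, h k = (1 - θ - θ * coth (μ * a) * Real.tanh (μ * b)) ^ k * h 0 := by
  have hsa : (0:ℝ) < Real.sinh (μ * a) := Real.sinh_pos_iff.2 (by positivity)
  have hcb : (0:ℝ) < Real.cosh (μ * b) := Real.cosh_pos _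
  have step : ∀ k : ℕ,
      h (k + 1) = (1 - θ - θ * coth (μ * a) * Real.tanh (μ * b)) * h k := by
    intro k
    obtain ⟨e₁, e₂, hc1, hode1, hbl, hbr, hc2, hode2, hb2, hmatch, hrec⟩ := hiter k
    have h1 := ode_structure (μ := μ) (by linarith : -a < 0) e₁ hc1 hode1
    have h2 := ode_structure (μ := μ) (by linarith : (0:ℝ) < b) e₂ hc2 hode2
    have hmem0 : (0:ℝ) ∈ Icc (-a) 0 := ⟨by linarith, le_refl 0⟩
    have hmemb : b ∈ Icc (0:ℝ) b := ⟨le_of_lt hb, le_refl b⟩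
    obtain ⟨A1, A2⟩ := h1 0 hmem0
    obtain ⟨B1, _⟩ := h2 b hmemb
    rw [show (0:ℝ) - -a = a by ring] at A1 A2
    rw [show b - 0 = b by ring] at B1
    rw [hbl] at A1 A2
    rw [hbr] at A1
    rw [hb2] at B1
    rw [hmatch, A2] at B1
    -- A1 : μ * h k = μ * 0 * cosh (μ*a) + D₁ * sinh (μ*a)
    -- B1 : μ * 0 = μ * e₂ 0 * cosh (μ*b) + (μ*0*sinh+D₁*cosh) * sinh (μ*b)
    rw [hrec, coth, Real.tanh_eq_sinh_div_cosh]
    set D₁ := derivWithin e₁ (Icc (-a) 0) (-a) with hD₁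
    field_simp
    apply mul_left_cancel₀ (ne_of_gt hμ)
    linear_combination (-θ * Real.sinh (μ * a)) * B1
      + θ * Real.cosh (μ * a) * Real.sinh (μ * b) * A1
  intro k
  induction k with
  | zero => simp
  | succ n ih => rw [step n, ih]; ring
end

section
/- Let c > 0, λ, τ, θ ∈ ℝ, a > 0, b > 0, and let s ∈ ℝ be such that σ := s² − λ·e^{−τs} > 0; set μ := √σ / c. Let (h_k)_{k≥0} be a sequence of real numbers and suppose that for every k ≥ 1 there exist functions e₁ᵏ, e₂ᵏ : ℝ → ℝ such that: (i) e₁ᵏ is twice continuously differentiable on [−a, 0], satisfies c²·(e₁ᵏ)'' = σ·e₁ᵏ on [−a, 0], e₁ᵏ(−a) = 0 and e₁ᵏ(0) = h_{k−1}; (ii) e₂ᵏ is twice continuously differentiable on [0, b], satisfies c²·(e₂ᵏ)'' = σ·e₂ᵏ on [0, b], e₂ᵏ(b) = 0 and (e₂ᵏ)'(0) = (e₁ᵏ)'(0); (iii) h_k = θ·e₂ᵏ(0) + (1 − θ)·h_{k−1}. Then h_k = (1 − θ − θ·coth(μa)·tanh(μb))ᵏ·h_0 for all k ≥ 0. In particular,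 for equal subdomains a = b one has h_k = (1 − 2θ)ᵏ·h_0; hence if θ = 1/2 then h_k = 0 for all k ≥ 1, and if 0 < θ < 1 then |h_k| ≤ |1 − 2θ|ᵏ·|h_0| and h_k → 0 as k → ∞. -/
open Set Filter

lemma wronskian_const_s13 {p q mu cc : ℝ} (hpq : p < q) (hcc : 0 < cc)
    (f : ℝ → ℝ) (hf : ContDiffOn ℝ 2 f (Icc p q))
    (hode : ∀ x ∈ Icc p q,
      cc ^ 2 * derivWithin (derivWithin f (Icc p q)) (Icc p q) x
        = (cc ^ 2 * mu ^ 2) * f x)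
    (r : ℝ) :
    derivWithin f (Icc p q) q * Real.sinh (mu * (q - r))
      - f q * (mu * Real.cosh (mu * (q - r)))
    = derivWithin f (Icc p q) p * Real.sinh (mu * (p - r))
      - f p * (mu * Real.cosh (mu * (p - r))) := by
  set I := Icc p q with hI
  have hU : UniqueDiffOn ℝ I := uniqueDiffOn_Icc hpq
  set f1 := derivWithin f I with hf1def
  have hf1 : ContDiffOn ℝ 1 f1 I := hf.derivWithin hU (by norm_num)
  have hfd : DifferentiableOn ℝ f I := hf.differentiableOn (by norm_num)
  have hf1d : DifferentiableOn ℝ f1 I := hf1.differentiableOn (by norm_num)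
  set W : ℝ → ℝ := fun x => f1 x * Real.sinh (mu * (x - r))
    - f x * (mu * Real.cosh (mu * (x - r))) with hW
  have hWderiv : ∀ x ∈ I, HasDerivWithinAt W 0 I x := by
    intro x hx
    have hinner : HasDerivAt (fun x => mu * (x - r)) mu x := by
      simpa using (((hasDerivAt_id x).sub_const r).const_mul mu)
    have hsinh : HasDerivAt (fun x => Real.sinh (mu * (x - r)))
        (Real.cosh (mu * (x - r)) * mu) x :=
      hinner.sinh
    have hcosh : HasDerivAt (fun x => mu * Real.cosh (mu * (x - r)))
        (mu * (Real.sinh (mu * (x - r)) * mu)) x :=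
      hinner.cosh.const_mul mu
    have hfx : HasDerivWithinAt f (f1 x) I x := (hfd x hx).hasDerivWithinAt
    have hf1x : HasDerivWithinAt f1 (derivWithin f1 I x) I x :=
      (hf1d x hx).hasDerivWithinAt
    have h1 : HasDerivWithinAt (fun x => f1 x * Real.sinh (mu * (x - r)))
        (derivWithin f1 I x * Real.sinh (mu * (x - r))
          + f1 x * (Real.cosh (mu * (x - r)) * mu)) I x :=
      hf1x.mul hsinh.hasDerivWithinAt
    have h2 : HasDerivWithinAt (fun x => f x * (mu * Real.cosh (mu * (x - r))))
        (f1 x * (mu * Real.cosh (mu * (x - r)))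
          + f x * (mu * (Real.sinh (mu * (x - r)) * mu))) I x :=
      hfx.mul hcosh.hasDerivWithinAt
    have key : derivWithin f1 I x = mu ^ 2 * f x := by
      have hcc2 : cc ^ 2 ≠ 0 := by positivity
      exact mul_left_cancel₀ hcc2 (by linarith [hode x hx])
    have := h1.sub h2
    exact this.congr_deriv (by rw [key]; ring)
  have hcont : ContinuousOn W I := by
    apply ContinuousOn.sub
    · exact hf1.continuousOn.mul
        ((Real.continuous_sinh.comp (by continuity)).continuousOn)
    · exact hf.continuousOn.mul
        ((continuous_const.mul (Real.continuous_cosh.comp (by continuity))).continuousOn)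
  have hconst : ∀ x ∈ Icc p q, W x = W p := by
    apply constant_of_has_deriv_right_zero hcont
    intro x hx
    exact (hWderiv x (Ico_subset_Icc_self hx)).mono_of_mem_nhdsWithin
      (Icc_mem_nhdsGE_of_mem hx)
  exact hconst q (right_mem_Icc.mpr hpq.le)

theorem dnwr_delay_wave_convergence
    (c lam τ θ a b s : ℝ) (hc : 0 < c) (ha : 0 < a) (hb : 0 < b)
    (hσ : 0 < s ^ 2 - lam * Real.exp (-τ * s))
    (μ : ℝ) (hμ : μ = Real.sqrt (s ^ 2 - lam * Real.exp (-τ * s)) / c)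
    (h : ℕ → ℝ)
    (hiter : ∀ k : ℕ, ∃ e₁ e₂ : ℝ → ℝ,
      ContDiffOn ℝ 2 e₁ (Icc (-a) 0) ∧
      (∀ x ∈ Icc (-a) 0,
        c ^ 2 * derivWithin (derivWithin e₁ (Icc (-a) 0)) (Icc (-a) 0) x
          = (s ^ 2 - lam * Real.exp (-τ * s)) * e₁ x) ∧
      e₁ (-a) = 0 ∧ e₁ 0 = h k ∧
      ContDiffOn ℝ 2 e₂ (Icc 0 b) ∧
      (∀ x ∈ Icc 0 b,
        c ^ 2 * derivWithin (derivWithin e₂ (Icc 0 b)) (Icc 0 b) x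
          = (s ^ 2 - lam * Real.exp (-τ * s)) * e₂ x) ∧
      e₂ b = 0 ∧
      derivWithin e₂ (Icc 0 b) 0 = derivWithin e₁ (Icc (-a) 0) 0 ∧
      h (k + 1) = θ * e₂ 0 + (1 - θ) * h k) :
    (∀ k : ℕ, h k = (1 - θ - θ * coth (μ * a) * Real.tanh (μ * b)) ^ k * h 0) ∧
    (a = b →
      (∀ k : ℕ, h k = (1 - 2 * θ) ^ k * h 0) ∧
      (θ = 1 / 2 → ∀ k : ℕ, 1 ≤ k → h k = 0) ∧
      (0 < θ → θ < 1 →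
        (∀ k : ℕ, |h k| ≤ |1 - 2 * θ| ^ k * |h 0|) ∧
        Tendsto h atTop (nhds 0))) := by
  have hμpos : 0 < μ := by
    rw [hμ]; positivity
  have hs2 : s ^ 2 - lam * Real.exp (-τ * s) = c ^ 2 * μ ^ 2 := by
    rw [hμ]
    rw [div_pow, Real.sq_sqrt hσ.le]
    field_simp
  have hsa : Real.sinh (μ * a) ≠ 0 := by positivity
  have hcb : (Real.cosh (μ * b)) ≠ 0 := (Real.cosh_pos _).ne'
  have hμ0 : μ ≠ 0 := ne_of_gt hμpos
  -- the one-step recursion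
  have step : ∀ k : ℕ,
      h (k + 1) = (1 - θ - θ * coth (μ * a) * Real.tanh (μ * b)) * h k := by
    intro k
    obtain ⟨e₁, e₂, h1cd, h1ode, h1a, h10, h2cd, h2ode, h2b, hmatch, hrec⟩ := hiter k
    have hode1 : ∀ x ∈ Icc (-a) 0,
        c ^ 2 * derivWithin (derivWithin e₁ (Icc (-a) 0)) (Icc (-a) 0) x
          = (c ^ 2 * μ ^ 2) * e₁ x := by
      intro x hx; rw [← hs2]; exact h1ode x hx
    have hode2 : ∀ x ∈ Icc 0 b,
        c ^ 2 * derivWithin (derivWithin e₂ (Icc 0 b)) (Icc 0 b) x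
          = (c ^ 2 * μ ^ 2) * e₂ x := by
      intro x hx; rw [← hs2]; exact h2ode x hx
    have w1 := wronskian_const_s13 (neg_lt_zero.mpr ha) hc e₁ h1cd hode1 (-a)
    have w2 := wronskian_const_s13 hb hc e₂ h2cd hode2 b
    rw [h1a, h10] at w1
    rw [h2b] at w2
    have e1 : derivWithin e₁ (Icc (-a) 0) 0 * Real.sinh (μ * a)
        = h k * (μ * Real.cosh (μ * a)) := by
      have ha1 : (0 : ℝ) - -a = a := by ring
      have ha2 : -a - -a = (0 : ℝ) := by ring
      rw [ha1, ha2, mul_zero, Real.sinh_zero, Real.cosh_zero] at w1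
      linarith [w1]
    have e2 : e₂ 0 * (μ * Real.cosh (μ * b))
        = -(derivWithin e₂ (Icc 0 b) 0 * Real.sinh (μ * b)) := by
      have hb1 : b - b = (0 : ℝ) := by ring
      have hb2 : (0 : ℝ) - b = -b := by ring
      rw [hb1, hb2, mul_zero, Real.sinh_zero, Real.cosh_zero, mul_neg,
        Real.sinh_neg, Real.cosh_neg] at w2
      linarith [w2]
    rw [hmatch] at e2
    -- solve for e₂ 0
    have e3 : μ * (e₂ 0 * (Real.sinh (μ * a) * Real.cosh (μ * b)))
        = μ * (-(Real.cosh (μ * a) * Real.sinh (μ * b)) * h k) := by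
      linear_combination Real.sinh (μ * a) * e2 - Real.sinh (μ * b) * e1
    have e4 : e₂ 0 * (Real.sinh (μ * a) * Real.cosh (μ * b))
        = -(Real.cosh (μ * a) * Real.sinh (μ * b)) * h k :=
      mul_left_cancel₀ hμ0 e3
    rw [hrec, coth, Real.tanh_eq_sinh_div_cosh]
    field_simp
    linear_combination θ * e4
  refine ⟨?_, ?_⟩
  · intro k
    induction k with
    | zero => simp
    | succ n ih => rw [step n, ih, pow_succ]; ring
  · intro hab
    subst hab
    have hRR : 1 - θ - θ * coth (μ * a) * Real.tanh (μ * a) = 1 - 2 * θ := by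
      rw [coth, Real.tanh_eq_sinh_div_cosh]
      have hca : (Real.cosh (μ * a)) ≠ 0 := (Real.cosh_pos _).ne'
      field_simp
      ring
    have hgeom : ∀ k : ℕ, h k = (1 - 2 * θ) ^ k * h 0 := by
      intro k
      induction k with
      | zero => simp
      | succ n ih => rw [step n, ih, hRR, pow_succ]; ring
    refine ⟨hgeom, ?_, ?_⟩
    · intro hθ k hk
      rw [hgeom k, hθ]
      have h0 : (1 - 2 * (1/2 : ℝ)) = 0 := by norm_num
      rw [h0, zero_pow (by omega : k ≠ 0), zero_mul]
    · intro hθ0 hθ1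
      constructor
      · intro k
        rw [hgeom k, abs_mul, abs_pow]
      · have hr : |1 - 2 * θ| < 1 := abs_lt.mpr ⟨by linarith, by linarith⟩
        have := (tendsto_pow_atTop_nhds_zero_of_abs_lt_one hr).mul_const (h 0)
        rw [zero_mul] at this
        exact this.congr (fun k => (hgeom k).symm)
end

section
/- Let c > 0, λ, τ, θ ∈ ℝ, a > 0, b > 0, and let s ∈ ℝ be such that σ := s² − λ·e^{−τs} > 0; set μ := √σ / c. Let (g_k)_{k≥0} be a sequence of real numbers and suppose that for every k ≥ 1 there exist functions e₁ᵏ, φ₁ᵏ (twice continuously differentiable on [−a, 0], satisfying c²·f'' = σ·f on [−a, 0] and f(−a) = 0) and e₂ᵏ, φ₂ᵏ (twice continuously differentiable on [0, b], satisfying c²·f'' = σ·f on [0, b] and f(b) = 0) such that e₁ᵏ(0) = g_{k−1}, e₂ᵏ(0) = g_{k−1}, (φ₁ᵏ)'(0) = (e₁ᵏ)'(0) − (e₂ᵏ)'(0), (φ₂ᵏ)'(0) = (e₂ᵏ)'(0) − (e₁ᵏ)'(0), and g_k = g_{k−1} − θ·(φ₁ᵏ(0) + φ₂ᵏ(0)).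 Then g_k = (1 − θ·(2 + tanh(μa)/tanh(μb) + tanh(μb)/tanh(μa)))ᵏ·g_0 for all k ≥ 0. In particular, for equal subdomains a = b one has g_k = (1 − 4θ)ᵏ·g_0; hence if θ = 1/4 then g_k = 0 for all k ≥ 1, and if 0 < θ < 1/2 then |g_k| ≤ |1 − 4θ|ᵏ·|g_0| and g_k → 0 as k → ∞. -/
open Set Filter

private lemma nnwr_sol_formula (m p q : ℝ) (hm : 0 < m) (hpq : p < q) (f : ℝ → ℝ)
    (hf : ContDiffOn ℝ 2 f (Icc p q))
    (hode : ∀ x ∈ Icc p q,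
      derivWithin (derivWithin f (Icc p q)) (Icc p q) x = m ^ 2 * f x) :
    ∀ x ∈ Icc p q,
      f x = f p * Real.cosh (m * (x - p))
        + (derivWithin f (Icc p q) p / m) * Real.sinh (m * (x - p)) ∧
      derivWithin f (Icc p q) x
        = f p * (m * Real.sinh (m * (x - p)))
          + derivWithin f (Icc p q) p * Real.cosh (m * (x - p)) := by
  have hud : UniqueDiffOn ℝ (Icc p q) := uniqueDiffOn_Icc hpq
  set s : Set ℝ := Icc p q with hs
  set f' : ℝ → ℝ := derivWithin f s with hf'def
  set B : ℝ := f p with hB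
  set A : ℝ := f' p with hA
  set F : ℝ → ℝ × ℝ := fun x => (f x, f' x) with hF
  set G : ℝ → ℝ × ℝ := fun x =>
    (B * Real.cosh (m * (x - p)) + (A / m) * Real.sinh (m * (x - p)),
     B * (m * Real.sinh (m * (x - p))) + A * Real.cosh (m * (x - p))) with hG
  set v : ℝ → ℝ × ℝ → ℝ × ℝ := fun _ z => (z.2, m ^ 2 * z.1) with hv
  -- Lipschitz bound for v
  have hvlip : ∀ t : ℝ, LipschitzWith (⟨m ^ 2 + 1, by positivity⟩ : NNReal) (v t) := by
    intro t
    apply LipschitzWith.of_dist_le_mul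
    intro z w
    simp only [hv, Prod.dist_eq, Real.dist_eq]
    have h1 : |z.2 - w.2| ≤ (m ^ 2 + 1) * max |z.1 - w.1| |z.2 - w.2| := by
      have := le_max_right |z.1 - w.1| |z.2 - w.2|
      nlinarith [abs_nonneg (z.1 - w.1), abs_nonneg (z.2 - w.2), sq_nonneg m]
    have h2 : |m ^ 2 * z.1 - m ^ 2 * w.1| ≤ (m ^ 2 + 1) * max |z.1 - w.1| |z.2 - w.2| := by
      have h3 : |m ^ 2 * z.1 - m ^ 2 * w.1| = m ^ 2 * |z.1 - w.1| := by
        rw [← mul_sub, abs_mul, abs_of_nonneg (sq_nonneg m)]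
      have := le_max_left |z.1 - w.1| |z.2 - w.2|
      nlinarith [abs_nonneg (z.1 - w.1), abs_nonneg (z.2 - w.2)]
    exact max_le h1 h2
  have hf1 : ContDiffOn ℝ 1 f' s := hf.derivWithin hud (by norm_num)
  -- derivative facts for F within s
  have hFder : ∀ t ∈ s, HasDerivWithinAt F (v t (F t)) s t := by
    intro t ht
    have h1 : HasDerivWithinAt f (f' t) s t :=
      ((hf.differentiableOn (by norm_num)) t ht).hasDerivWithinAt
    have h2 : HasDerivWithinAt f' (derivWithin f' s t) s t :=
      ((hf1.differentiableOn (by norm_num)) t ht).hasDerivWithinAt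
    have h3 : derivWithin f' s t = m ^ 2 * f t := hode t ht
    rw [h3] at h2
    exact h1.prodMk h2
  -- derivative facts for G
  have hGder : ∀ t : ℝ, HasDerivAt G (v t (G t)) t := by
    intro t
    have hlin : HasDerivAt (fun x : ℝ => m * (x - p)) m t := by
      simpa using ((hasDerivAt_id t).sub_const p).const_mul m
    have hcosh : HasDerivAt (fun x : ℝ => Real.cosh (m * (x - p)))
        (Real.sinh (m * (t - p)) * m) t :=
      hlin.cosh
    have hsinh : HasDerivAt (fun x : ℝ => Real.sinh (m * (x - p)))
        (Real.cosh (m * (t - p)) * m) t :=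
      hlin.sinh
    have hg1 : HasDerivAt (fun x : ℝ =>
        B * Real.cosh (m * (x - p)) + (A / m) * Real.sinh (m * (x - p)))
        (B * (m * Real.sinh (m * (t - p))) + A * Real.cosh (m * (t - p))) t := by
      have := (hcosh.const_mul B).add (hsinh.const_mul (A / m))
      refine this.congr_deriv ?_
      have hm0 : m ≠ 0 := hm.ne'
      field_simp
    have hg2 : HasDerivAt (fun x : ℝ =>
        B * (m * Real.sinh (m * (x - p))) + A * Real.cosh (m * (x - p)))
        (m ^ 2 * (B * Real.cosh (m * (t - p)) + (A / m) * Real.sinh (m * (t - p)))) t := by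
      have := ((hsinh.const_mul m).const_mul B).add (hcosh.const_mul A)
      refine this.congr_deriv ?_
      have hm0 : m ≠ 0 := hm.ne'
      field_simp
    exact hg1.prodMk hg2
  have heq : EqOn F G s := by
    apply ODE_solution_unique_of_mem_Icc_right
      (v := v) (s := fun _ => (univ : Set (ℝ × ℝ)))
      (fun t _ => (hvlip t).lipschitzOnWith)
    · exact ((hf.continuousOn).prodMk (hf1.continuousOn))
    · intro t ht
      exact (hFder t (Ico_subset_Icc_self ht)).mono_of_mem_nhdsWithin
        (Icc_mem_nhdsGE_of_mem ht)
    · intro t _; trivial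
    · exact Continuous.continuousOn (by fun_prop)
    · intro t ht
      exact ((hGder t).hasDerivWithinAt).mono_of_mem_nhdsWithin (Icc_mem_nhdsGE_of_mem ht)
    · intro t _; trivial
    · have : G p = (B, A) := by simp [hG]
      simp [hF, this, hB, hA]
  intro x hx
  have := heq hx
  constructor
  · exact congrArg Prod.fst this
  · exact congrArg Prod.snd this

theorem nnwr_delay_wave_convergence
    (c lam τ θ a b s : ℝ) (hc : 0 < c) (ha : 0 < a) (hb : 0 < b)
    (hσ : 0 < s ^ 2 - lam * Real.exp (-τ * s))
    (μ : ℝ) (hμ : μ = Real.sqrt (s ^ 2 - lam * Real.exp (-τ * s)) / c)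
    (g : ℕ → ℝ)
    (hiter : ∀ k : ℕ, ∃ e₁ φ₁ e₂ φ₂ : ℝ → ℝ,
      ContDiffOn ℝ 2 e₁ (Icc (-a) 0) ∧
      (∀ x ∈ Icc (-a) 0,
        c ^ 2 * derivWithin (derivWithin e₁ (Icc (-a) 0)) (Icc (-a) 0) x
          = (s ^ 2 - lam * Real.exp (-τ * s)) * e₁ x) ∧
      e₁ (-a) = 0 ∧
      ContDiffOn ℝ 2 φ₁ (Icc (-a) 0) ∧
      (∀ x ∈ Icc (-a) 0,
        c ^ 2 * derivWithin (derivWithin φ₁ (Icc (-a) 0)) (Icc (-a) 0) x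
          = (s ^ 2 - lam * Real.exp (-τ * s)) * φ₁ x) ∧
      φ₁ (-a) = 0 ∧
      ContDiffOn ℝ 2 e₂ (Icc 0 b) ∧
      (∀ x ∈ Icc 0 b,
        c ^ 2 * derivWithin (derivWithin e₂ (Icc 0 b)) (Icc 0 b) x
          = (s ^ 2 - lam * Real.exp (-τ * s)) * e₂ x) ∧
      e₂ b = 0 ∧
      ContDiffOn ℝ 2 φ₂ (Icc 0 b) ∧
      (∀ x ∈ Icc 0 b,
        c ^ 2 * derivWithin (derivWithin φ₂ (Icc 0 b)) (Icc 0 b) x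
          = (s ^ 2 - lam * Real.exp (-τ * s)) * φ₂ x) ∧
      φ₂ b = 0 ∧
      e₁ 0 = g k ∧ e₂ 0 = g k ∧
      derivWithin φ₁ (Icc (-a) 0) 0
        = derivWithin e₁ (Icc (-a) 0) 0 - derivWithin e₂ (Icc 0 b) 0 ∧
      derivWithin φ₂ (Icc 0 b) 0
        = derivWithin e₂ (Icc 0 b) 0 - derivWithin e₁ (Icc (-a) 0) 0 ∧
      g (k + 1) = g k - θ * (φ₁ 0 + φ₂ 0)) :
    (∀ k : ℕ, g k
        = (1 - θ * (2 + Real.tanh (μ * a) / Real.tanh (μ * b)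
            + Real.tanh (μ * b) / Real.tanh (μ * a))) ^ k * g 0) ∧
    (a = b →
      (∀ k : ℕ, g k = (1 - 4 * θ) ^ k * g 0) ∧
      (θ = 1 / 4 → ∀ k : ℕ, 1 ≤ k → g k = 0) ∧
      (0 < θ → θ < 1 / 2 →
        (∀ k : ℕ, |g k| ≤ |1 - 4 * θ| ^ k * |g 0|) ∧
        Tendsto g atTop (nhds 0))) := by
  set σ' : ℝ := s ^ 2 - lam * Real.exp (-τ * s) with hσ'
  have hm : 0 < μ := by
    rw [hμ]; positivity
  have hm2 : μ ^ 2 = σ' / c ^ 2 := by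
    rw [hμ, div_pow, Real.sq_sqrt hσ.le]
  have hta : 0 < Real.tanh (μ * a) := by
    rw [Real.tanh_eq_sinh_div_cosh]
    exact div_pos (by rw [Real.sinh_pos_iff]; positivity) (Real.cosh_pos _)
  have htb : 0 < Real.tanh (μ * b) := by
    rw [Real.tanh_eq_sinh_div_cosh]
    exact div_pos (by rw [Real.sinh_pos_iff]; positivity) (Real.cosh_pos _)
  set ta : ℝ := Real.tanh (μ * a) with hta'
  set tb : ℝ := Real.tanh (μ * b) with htb'
  set r : ℝ := 1 - θ * (2 + ta / tb + tb / ta) with hr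
  -- translate ODE: c² f'' = σ' f  ↔  f'' = μ² f
  have hode_conv : ∀ (u v : Set ℝ) (f : ℝ → ℝ),
      (∀ x ∈ u, c ^ 2 * derivWithin (derivWithin f u) u x = σ' * f x) →
      (∀ x ∈ u, derivWithin (derivWithin f u) u x = μ ^ 2 * f x) := by
    intro u _ f h x hx
    have := h x hx
    rw [hm2]
    field_simp
    linarith [this]
  -- boundary relations
  have hleft : ∀ f : ℝ → ℝ, ContDiffOn ℝ 2 f (Icc (-a) 0) →
      (∀ x ∈ Icc (-a) 0,
        c ^ 2 * derivWithin (derivWithin f (Icc (-a) 0)) (Icc (-a) 0) x = σ' * f x) →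
      f (-a) = 0 →
      derivWithin f (Icc (-a) 0) 0 * ta = μ * f 0 := by
    intro f hf hode h0
    have h := nnwr_sol_formula μ (-a) 0 hm (by linarith) f hf
      (hode_conv _ ∅ f hode) 0 (by constructor <;> linarith)
    obtain ⟨h1, h2⟩ := h
    rw [h0] at h1 h2
    simp only [zero_mul, zero_add, sub_neg_eq_add, zero_add] at h1 h2
    rw [h1, h2, hta', Real.tanh_eq_sinh_div_cosh]
    field_simp
  have hright : ∀ f : ℝ → ℝ, ContDiffOn ℝ 2 f (Icc 0 b) →
      (∀ x ∈ Icc 0 b,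
        c ^ 2 * derivWithin (derivWithin f (Icc 0 b)) (Icc 0 b) x = σ' * f x) →
      f b = 0 →
      derivWithin f (Icc 0 b) 0 * tb = -(μ * f 0) := by
    intro f hf hode h0
    have h := nnwr_sol_formula μ 0 b hm hb f hf
      (hode_conv _ ∅ f hode) b (by constructor <;> linarith)
    have h1 := h.1
    rw [h0, sub_zero] at h1
    have hμ0 : μ ≠ 0 := hm.ne'
    have hcosh : Real.cosh (μ * b) ≠ 0 := (Real.cosh_pos _).ne'
    have h1' : derivWithin f (Icc 0 b) 0 * Real.sinh (μ * b)
        = -(μ * f 0 * Real.cosh (μ * b)) := by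
      field_simp at h1
      linarith
    rw [htb', Real.tanh_eq_sinh_div_cosh]
    field_simp
    linarith
  -- the one-step recursion
  have hstep : ∀ k : ℕ, g (k + 1) = r * g k := by
    intro k
    obtain ⟨e₁, φ₁, e₂, φ₂, he₁c, he₁o, he₁b, hφ₁c, hφ₁o, hφ₁b, he₂c, he₂o, he₂b,
      hφ₂c, hφ₂o, hφ₂b, he₁0, he₂0, hd₁, hd₂, hgk⟩ := hiter k
    have E1 := hleft e₁ he₁c he₁o he₁b
    have P1 := hleft φ₁ hφ₁c hφ₁o hφ₁b
    have E2 := hright e₂ he₂c he₂o he₂b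
    have P2 := hright φ₂ hφ₂c hφ₂o hφ₂b
    rw [he₁0] at E1
    rw [he₂0] at E2
    rw [hd₁] at P1
    rw [hd₂] at P2
    -- solve for φ₁ 0 + φ₂ 0
    have hsum : φ₁ 0 + φ₂ 0 = (2 + ta / tb + tb / ta) * g k := by
      have hE1 : derivWithin e₁ (Icc (-a) 0) 0 = μ * g k / ta := by
        field_simp at E1 ⊢; linarith
      have hE2 : derivWithin e₂ (Icc 0 b) 0 = -(μ * g k) / tb := by
        field_simp at E2 ⊢; linarith
      rw [hE1, hE2] at P1 P2
      have hφ1 : φ₁ 0 = (μ * g k / ta - -(μ * g k) / tb) * ta / μ := by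
        field_simp at P1 ⊢; linarith
      have hφ2 : φ₂ 0 = -((-(μ * g k) / tb - μ * g k / ta) * tb) / μ := by
        field_simp at P2 ⊢; linarith
      rw [hφ1, hφ2]
      field_simp
      ring
    rw [hgk, hsum, hr]
    ring
  have hmain : ∀ k : ℕ, g k = r ^ k * g 0 := by
    intro k
    induction k with
    | zero => simp
    | succ n ih => rw [hstep n, ih, pow_succ]; ring
  refine ⟨hmain, ?_⟩
  intro hab
  have hr4 : r = 1 - 4 * θ := by
    rw [hr, hta', htb', hab]
    have htb0 : Real.tanh (μ * b) ≠ 0 := htb.ne'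
    field_simp
    ring
  have hmain4 : ∀ k : ℕ, g k = (1 - 4 * θ) ^ k * g 0 := by
    intro k; rw [← hr4]; exact hmain k
  refine ⟨hmain4, ?_, ?_⟩
  · intro hθ k hk
    rw [hmain4 k, hθ]
    have h14 : (1 - 4 * (1 / 4 : ℝ)) = 0 := by norm_num
    rw [h14, zero_pow (by omega : k ≠ 0), zero_mul]
  · intro hθ1 hθ2
    have habs : |1 - 4 * θ| < 1 := by
      rw [abs_lt]; constructor <;> linarith
    constructor
    · intro k
      rw [hmain4 k, abs_mul, abs_pow]
    · have h0 : Tendsto (fun k : ℕ => (1 - 4 * θ) ^ k * g 0) atTop (nhds 0) := by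
        have := (tendsto_pow_atTop_nhds_zero_of_abs_lt_one habs).mul_const (g 0)
        simpa using this
      exact Tendsto.congr (fun k => (hmain4 k).symm) h0
end

section
/- Let μ₀ > 0, c, r, d, τ, θ ∈ ℝ, a > 0, b > 0, and let s ∈ ℝ be such that s − r − d·e^{−τs} > 0. Set κ := (s − r − d·e^{−τs}) / (μ₀²·(1 + c²·e^{−τs})) (note 1 + c²e^{−τs} > 0 for real s) and μ̂ := √κ. Let (h_k)_{k≥0} be a sequence of real numbers and suppose that for every k ≥ 1 there exist functions e₁ᵏ, e₂ᵏ : ℝ → ℝ such that: (i) e₁ᵏ is twice continuously differentiable on [−a, 0], satisfies μ₀²·(1 + c²e^{−τs})·(e₁ᵏ)'' = (s − r − de^{−τs})·e₁ᵏ on [−a, 0], e₁ᵏ(−a) = 0 and e₁ᵏ(0) = h_{k−1}; (ii) e₂ᵏ is twice continuously differentiable on [0, b], satisfies the same ODE on [0, b], e₂ᵏ(b) = 0 and (e₂ᵏ)'(0) = (e₁ᵏ)'(0); (iii) h_k = θ·e₂ᵏ(0) + (1 − θ)·h_{k−1}. Then h_k = (1 − θ − θ·coth(μ̂a)·tanh(μ̂b))ᵏ·h_0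 for all k ≥ 0. In particular, for equal subdomains a = b one has h_k = (1 − 2θ)ᵏ·h_0; hence if θ = 1/2 then h_k = 0 for all k ≥ 1, and if 0 < θ < 1 then |h_k| ≤ |1 − 2θ|ᵏ·|h_0| and h_k → 0 as k → ∞. -/
open Set Filter

lemma wronskian_const_s15 {l u : ℝ} {e g g' : ℝ → ℝ} {κ : ℝ}
    (hlu : l < u)
    (he : ContDiffOn ℝ 2 e (Icc l u))
    (hode : ∀ x ∈ Icc l u, derivWithin (derivWithin e (Icc l u)) (Icc l u) x = κ * e x)
    (hg : ∀ x, HasDerivAt g (g' x) x)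
    (hg' : ∀ x, HasDerivAt g' (κ * g x) x) :
    ∀ x ∈ Icc l u, derivWithin e (Icc l u) x * g x - e x * g' x
      = derivWithin e (Icc l u) l * g l - e l * g' l := by
  set I := Icc l u with hI
  have hU : UniqueDiffOn ℝ I := uniqueDiffOn_Icc hlu
  have hde : ContDiffOn ℝ 1 (derivWithin e I) I := he.derivWithin hU (by norm_num)
  have hdiff_e : DifferentiableOn ℝ e I := he.differentiableOn (by norm_num)
  have hdiff_e' : DifferentiableOn ℝ (derivWithin e I) I := hde.differentiableOn (by norm_num)
  set W := fun x => derivWithin e I x * g x - e x * g' x with hW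
  have hWd : ∀ x ∈ I, HasDerivWithinAt W 0 I x := by
    intro x hx
    have h1 : HasDerivWithinAt e (derivWithin e I x) I x :=
      (hdiff_e x hx).hasDerivWithinAt
    have h2 : HasDerivWithinAt (derivWithin e I) (κ * e x) I x := by
      have h2' := (hdiff_e' x hx).hasDerivWithinAt
      rwa [hode x hx] at h2'
    have h3 : HasDerivWithinAt g (g' x) I x := (hg x).hasDerivWithinAt
    have h4 : HasDerivWithinAt g' (κ * g x) I x := (hg' x).hasDerivWithinAt
    have := (h2.mul h3).sub (h1.mul h4)
    exact this.congr_deriv (by ring)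
  have hcont : ContinuousOn W I := by
    apply ContinuousOn.sub
    · exact hdiff_e'.continuousOn.mul (fun x _ => ((hg x).continuousAt).continuousWithinAt)
    · exact hdiff_e.continuousOn.mul (fun x _ => ((hg' x).continuousAt).continuousWithinAt)
  exact constant_of_has_deriv_right_zero hcont (fun x hx =>
    (hWd x (Ico_subset_Icc_self hx)).mono_of_mem_nhdsWithin (Icc_mem_nhdsGE_of_mem hx))

/-- `HasDerivAt` for `x ↦ sinh (μ*(x+p))`. -/
lemma hasDerivAt_sinh_shift (μ p x : ℝ) :
    HasDerivAt (fun x => Real.sinh (μ * (x + p))) (μ * Real.cosh (μ * (x + p))) x := by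
  have hlin : HasDerivAt (fun x : ℝ => μ * (x + p)) μ x := by
    simpa using ((hasDerivAt_id x).add_const p).const_mul μ
  exact ((Real.hasDerivAt_sinh (μ * (x + p))).comp x hlin).congr_deriv (mul_comm _ _)

lemma hasDerivAt_cosh_shift (μ p x : ℝ) :
    HasDerivAt (fun x => μ * Real.cosh (μ * (x + p))) (μ ^ 2 * Real.sinh (μ * (x + p))) x := by
  have hlin : HasDerivAt (fun x : ℝ => μ * (x + p)) μ x := by
    simpa using ((hasDerivAt_id x).add_const p).const_mul μ
  have := ((Real.hasDerivAt_cosh (μ * (x + p))).comp x hlin).const_mul μ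
  exact this.congr_deriv (by ring)

theorem dnwr_neutral_pde_convergence
    (μ₀ c r d τ θ a b s : ℝ) (hμ₀ : 0 < μ₀) (ha : 0 < a) (hb : 0 < b)
    (hσ : 0 < s - r - d * Real.exp (-τ * s))
    (μ : ℝ)
    (hμ : μ = Real.sqrt ((s - r - d * Real.exp (-τ * s))
      / (μ₀ ^ 2 * (1 + c ^ 2 * Real.exp (-τ * s)))))
    (h : ℕ → ℝ)
    (hiter : ∀ k : ℕ, ∃ e₁ e₂ : ℝ → ℝ,
      ContDiffOn ℝ 2 e₁ (Icc (-a) 0) ∧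
      (∀ x ∈ Icc (-a) 0,
        μ₀ ^ 2 * (1 + c ^ 2 * Real.exp (-τ * s))
            * derivWithin (derivWithin e₁ (Icc (-a) 0)) (Icc (-a) 0) x
          = (s - r - d * Real.exp (-τ * s)) * e₁ x) ∧
      e₁ (-a) = 0 ∧ e₁ 0 = h k ∧
      ContDiffOn ℝ 2 e₂ (Icc 0 b) ∧
      (∀ x ∈ Icc 0 b,
        μ₀ ^ 2 * (1 + c ^ 2 * Real.exp (-τ * s))
            * derivWithin (derivWithin e₂ (Icc 0 b)) (Icc 0 b) x
          = (s - r - d * Real.exp (-τ * s)) * e₂ x) ∧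
      e₂ b = 0 ∧
      derivWithin e₂ (Icc 0 b) 0 = derivWithin e₁ (Icc (-a) 0) 0 ∧
      h (k + 1) = θ * e₂ 0 + (1 - θ) * h k) :
    (∀ k : ℕ, h k = (1 - θ - θ * coth (μ * a) * Real.tanh (μ * b)) ^ k * h 0) ∧
    (a = b →
      (∀ k : ℕ, h k = (1 - 2 * θ) ^ k * h 0) ∧
      (θ = 1 / 2 → ∀ k : ℕ, 1 ≤ k → h k = 0) ∧
      (0 < θ → θ < 1 →
        (∀ k : ℕ, |h k| ≤ |1 - 2 * θ| ^ k * |h 0|) ∧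
        Tendsto h atTop (nhds 0))) := by
  set E := Real.exp (-τ * s) with hE
  set σ := s - r - d * E with hσdef
  set D := μ₀ ^ 2 * (1 + c ^ 2 * E) with hD
  have hEpos : 0 < E := Real.exp_pos _
  have hDpos : 0 < D := by
    apply mul_pos (pow_pos hμ₀ 2)
    positivity
  have hκpos : 0 < σ / D := div_pos hσ hDpos
  have hμpos : 0 < μ := by rw [hμ]; exact Real.sqrt_pos.mpr hκpos
  have hμsq : μ ^ 2 = σ / D := by rw [hμ]; exact Real.sq_sqrt hκpos.le
  have hsinh_a : 0 < Real.sinh (μ * a) := Real.sinh_pos_iff.mpr (by positivity)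
  have hcosh_a : 0 < Real.cosh (μ * a) := Real.cosh_pos _
  have hcosh_b : 0 < Real.cosh (μ * b) := Real.cosh_pos _
  have hsinh_b : 0 < Real.sinh (μ * b) := Real.sinh_pos_iff.mpr (by positivity)
  -- key step
  have key : ∀ k : ℕ,
      h (k + 1) = (1 - θ - θ * coth (μ * a) * Real.tanh (μ * b)) * h k := by
    intro k
    obtain ⟨e₁, e₂, he₁, hode₁, hbd₁, hbd₂, he₂, hode₂, hbd₃, hmatch, hrec⟩ := hiter k
    -- normalize ODEs
    have hode₁' : ∀ x ∈ Icc (-a) 0,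
        derivWithin (derivWithin e₁ (Icc (-a) 0)) (Icc (-a) 0) x = μ ^ 2 * e₁ x := by
      intro x hx
      have := hode₁ x hx
      rw [hμsq]
      field_simp
      linarith [this]
    have hode₂' : ∀ x ∈ Icc 0 b,
        derivWithin (derivWithin e₂ (Icc 0 b)) (Icc 0 b) x = μ ^ 2 * e₂ x := by
      intro x hx
      have := hode₂ x hx
      rw [hμsq]
      field_simp
      linarith [this]
    -- Wronskian on the left subdomain with g x = sinh (μ (x + a))
    have hW₁ := wronskian_const_s15 (l := -a) (u := 0) (by linarith) he₁ hode₁'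
      (fun x => hasDerivAt_sinh_shift μ a x) (fun x => hasDerivAt_cosh_shift μ a x)
    have h0mem : (0 : ℝ) ∈ Icc (-a) 0 := by constructor <;> linarith
    have hW₁0 := hW₁ 0 h0mem
    rw [hbd₁, hbd₂] at hW₁0
    simp only [neg_add_cancel, mul_zero, Real.sinh_zero, zero_add, zero_mul, sub_zero] at hW₁0
    -- hW₁0 : e₁'(0) * sinh (μ a) - h k * (μ * cosh (μ a)) = 0
    have hder1 : derivWithin e₁ (Icc (-a) 0) 0 * Real.sinh (μ * a)
        = h k * (μ * Real.cosh (μ * a)) := by linarith [hW₁0]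
    -- Wronskian on the right subdomain with g x = sinh (μ (x + (-b)))
    have hW₂ := wronskian_const_s15 (l := 0) (u := b) hb he₂ hode₂'
      (fun x => hasDerivAt_sinh_shift μ (-b) x) (fun x => hasDerivAt_cosh_shift μ (-b) x)
    have hbmem : b ∈ Icc (0 : ℝ) b := by constructor <;> linarith
    have hW₂b := hW₂ b hbmem
    rw [hbd₃] at hW₂b
    simp only [add_neg_cancel, mul_zero, Real.sinh_zero, zero_add, zero_mul, sub_zero,
      mul_neg, Real.sinh_neg, Real.cosh_neg] at hW₂b
    -- hW₂b : e₂'(b) * 0 - 0 * ... = e₂'(0) * (-sinh (μ b)) - e₂ 0 * (μ * cosh (μ b))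
    rw [hmatch] at hW₂b
    have he₂0 : e₂ 0 = -(coth (μ * a) * Real.tanh (μ * b)) * h k := by
      have hd0 : derivWithin e₁ (Icc (-a) 0) 0
          = h k * (μ * Real.cosh (μ * a)) / Real.sinh (μ * a) := by
        field_simp at hder1 ⊢
        linarith [hder1]
      rw [hd0] at hW₂b
      rw [coth, Real.tanh_eq_sinh_div_cosh]
      field_simp at hW₂b ⊢
      nlinarith [hW₂b, hμpos, hsinh_a, hcosh_b]
    rw [hrec, he₂0]
    ring
  set ρ := 1 - θ - θ * coth (μ * a) * Real.tanh (μ * b) with hρ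
  have hmain : ∀ k : ℕ, h k = ρ ^ k * h 0 := by
    intro k
    induction k with
    | zero => simp
    | succ n ih => rw [key n, ih, pow_succ]; ring
  refine ⟨hmain, ?_⟩
  intro hab
  subst hab
  have hρeq : ρ = 1 - 2 * θ := by
    rw [hρ, coth, Real.tanh_eq_sinh_div_cosh]
    field_simp
    ring
  have hmain' : ∀ k : ℕ, h k = (1 - 2 * θ) ^ k * h 0 := by
    intro k; rw [hmain k, hρeq]
  refine ⟨hmain', ?_, ?_⟩
  · intro hθ k hk
    rw [hmain' k, hθ]
    have h0 : (1 : ℝ) - 2 * (1 / 2) = 0 := by norm_num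
    rw [h0, zero_pow (by omega : k ≠ 0), zero_mul]
  · intro hθ0 hθ1
    have habs : |1 - 2 * θ| < 1 := by rw [abs_lt]; constructor <;> linarith
    constructor
    · intro k
      rw [hmain' k, abs_mul, abs_pow]
    · have h1 : Tendsto (fun k : ℕ => (1 - 2 * θ) ^ k * h 0) atTop (nhds (0 * h 0)) :=
        (tendsto_pow_atTop_nhds_zero_of_abs_lt_one habs).mul_const _
      rw [zero_mul] at h1
      exact h1.congr (fun k => (hmain' k).symm)
end
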